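/- arXiv:2009.06677 — 8 statements merged into one kernel-verified Lean document; each statement's English description precedes it below -/
import Mathlib

section
/- Let φ̂₁,…,φ̂ᵣ be a basis of an r-dimensional subspace Ê ⊆ V, and let μ̂₁,…,μ̂ᵣ be positive real numbers with μ̂ⱼ ∉ Spec(T)\Λ for each j. Let G be the r×r Gram matrix G_{ij} = B(φ̂ⱼ, φ̂ᵢ), let λ_min(G) be its smallest eigenvalue, and set C(Λ̂,Λ) = max{C(μ̂ⱼ,Λ) : 1 ≤ j ≤ r}. Then for every nonzero v̂ ∈ Ê, ‖(I−S)v̂‖_B² / ‖v̂‖_B² ≤ (C(Λ̂,Λ)² / λ_min(G)) · Σ_{j=1}^r ‖φ̂ⱼ − μ̂ⱼ T⁻¹ φ̂ⱼ‖_B². -/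
open scoped RealInnerProductSpace

noncomputable section

variable {V : Type*} [NormedAddCommGroup V] [InnerProductSpace ℝ V]

/-- `Spec(T)`: the set of eigenvalues of `T`. -/
def specSet (T : V →ₗ[ℝ] V) : Set ℝ := {μ : ℝ | Module.End.HasEigenvalue T μ}

/-- `E(Λ)`: the sum of the eigenspaces of `T` corresponding to eigenvalues in `Λ`. -/
def ESub (T : V →ₗ[ℝ] V) (Λ : Set ℝ) : Submodule ℝ V :=
  ⨆ μ ∈ Λ, Module.End.eigenspace T μ

/-- `C(μ̂, Λ) = max_{ξ ∈ (Spec(T)\Λ) ∪ {0}} ξ / |ξ - μ̂|`. -/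
def Cconst (T : V →ₗ[ℝ] V) (Λ : Set ℝ) (μ : ℝ) : ℝ :=
  sSup ((fun ξ => ξ / |ξ - μ|) '' ((specSet T \ Λ) ∪ {0}))

/-- Squared energy norm `‖v‖_B² = B(v,v) = ⟪T v, v⟫`. -/
def enormSq (T : V →ₗ[ℝ] V) (v : V) : ℝ := ⟪T v, v⟫

/-- Energy norm `‖v‖_B = B(v,v)^{1/2}`. -/
def enorm (T : V →ₗ[ℝ] V) (v : V) : ℝ := Real.sqrt ⟪T v, v⟫

/-- `S`: the orthogonal projection of `V` onto `E(Λ)`, as an endomorphism of `V`. -/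
def Sproj [FiniteDimensional ℝ V] (T : V →ₗ[ℝ] V) (Λ : Set ℝ) : V →ₗ[ℝ] V :=
  (ESub T Λ).subtype ∘ₗ (ESub T Λ).orthogonalProjectionOnto.toLinearMap

/-- Theorem 2.2, eigenvector error trace estimate (2.7):
for every nonzero `v̂ ∈ Ê`,
`‖(I−S)v̂‖_B² / ‖v̂‖_B² ≤ (C(Λ̂,Λ)² / λ_min(G)) · Σ_j ‖φ̂ⱼ − μ̂ⱼ T⁻¹ φ̂ⱼ‖_B²`. -/
theorem stmt_0 [FiniteDimensional ℝ V]
    (T Tinv : V →ₗ[ℝ] V) (hTsymm : T.IsSymmetric)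
    (hTpos : ∀ v : V, v ≠ 0 → 0 < ⟪T v, v⟫)
    (hTinv₁ : ∀ v, T (Tinv v) = v) (hTinv₂ : ∀ v, Tinv (T v) = v)
    (Λ : Set ℝ) (hΛ : Λ ⊆ specSet T)
    (r : ℕ) (hr : 0 < r)
    (Ehat : Submodule ℝ V)
    (φ : Fin r → V) (hφli : LinearIndependent ℝ φ)
    (hφspan : Submodule.span ℝ (Set.range φ) = Ehat)
    (μ : Fin r → ℝ) (hμpos : ∀ j, 0 < μ j) (hμ : ∀ j, μ j ∉ specSet T \ Λ)
    (G : Matrix (Fin r) (Fin r) ℝ) (hG : ∀ i j, G i j = ⟪T (φ j), φ i⟫)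
    (lamMin : ℝ) (hlam₁ : lamMin ∈ spectrum ℝ G)
    (hlam₂ : ∀ x ∈ spectrum ℝ G, lamMin ≤ x)
    (CC : ℝ) (hCC : CC = ⨆ j : Fin r, Cconst T Λ (μ j))
    (v : V) (hv : v ∈ Ehat) (hv0 : v ≠ 0) :
    enormSq T (v - Sproj T Λ v) / enormSq T v
      ≤ CC ^ 2 / lamMin * ∑ j : Fin r, enormSq T (φ j - μ j • Tinv (φ j)) := by
  classical
  -- spectral basis
  set b : OrthonormalBasis (Fin (Module.finrank ℝ V)) ℝ V := hTsymm.eigenvectorBasis rfl with hbdef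
  set ξ : Fin (Module.finrank ℝ V) → ℝ := hTsymm.eigenvalues rfl with hξdef
  have hb : ∀ i, T (b i) = ξ i • b i := by
    intro i; exact_mod_cast hTsymm.apply_eigenvectorBasis rfl i
  have hξpos : ∀ i, 0 < ξ i := by
    intro i
    have h := hTpos (b i) (b.orthonormal.ne_zero i)
    rw [hb i, real_inner_smul_left, real_inner_self_eq_norm_sq, b.orthonormal.1 i] at h
    simpa using h
  have hTb' : ∀ (w : V) i, ⟪T w, b i⟫ = ξ i * ⟪b i, w⟫ := by
    intro w i
    rw [hTsymm w (b i), hb i, real_inner_smul_right, real_inner_comm]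
  have henorm : ∀ w : V, enormSq T w = ∑ i, ξ i * ⟪b i, w⟫ ^ 2 := by
    intro w
    have h1 : enormSq T w = ⟪T w, ∑ i, ⟪b i, w⟫ • b i⟫ := by
      rw [enormSq, b.sum_repr' w]
    rw [h1, inner_sum]
    refine Finset.sum_congr rfl fun i _ => ?_
    rw [real_inner_smul_right, hTb']; ring
  have henn : ∀ w : V, 0 ≤ enormSq T w := by
    intro w; rw [henorm]
    exact Finset.sum_nonneg fun i _ => mul_nonneg (hξpos i).le (sq_nonneg _)
  have haux : ∀ (μ' : ℝ) (w : V), T w = μ' • w → ∀ i, ⟪b i, w⟫ ≠ 0 → ξ i = μ' := by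
    intro μ' w hw i hne
    have h1 : ξ i * ⟪b i, w⟫ = μ' * ⟪b i, w⟫ := by
      rw [← hTb' w i, hw, real_inner_smul_left, real_inner_comm]
    exact mul_right_cancel₀ hne h1
  have hexistsc : ∀ w : V, w ≠ 0 → ∃ i, ⟪b i, w⟫ ≠ 0 := by
    intro w hw
    by_contra h
    push_neg at h
    apply hw
    rw [← b.sum_repr' w]
    simp [h]
  have hspec : specSet T ⊆ Set.range ξ := by
    intro μ' hμ'
    obtain ⟨w, hw⟩ := hμ'.exists_hasEigenvector
    obtain ⟨i, hi⟩ := hexistsc w hw.2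
    exact ⟨i, haux μ' w (Module.End.mem_eigenspace_iff.1 hw.1) i hi⟩
  set F : Finset (Fin (Module.finrank ℝ V)) := Finset.univ.filter (fun i => ξ i ∈ Λ) with hF
  -- ESub = span of eigenbasis vectors with eigenvalue in Λ
  have hESub : ESub T Λ = Submodule.span ℝ (b '' {i | ξ i ∈ Λ}) := by
    apply le_antisymm
    · refine iSup₂_le fun μ' hμ'Λ => ?_
      intro w hw
      rw [Module.End.mem_eigenspace_iff] at hw
      rw [← b.sum_repr' w]
      refine Submodule.sum_mem _ fun i _ => ?_
      by_cases hzero : ⟪b i, w⟫ = 0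
      · simp [hzero]
      · refine Submodule.smul_mem _ _ (Submodule.subset_span ⟨i, ?_, rfl⟩)
        show ξ i ∈ Λ
        rw [haux μ' w hw i hzero]; exact hμ'Λ
    · rw [Submodule.span_le]
      rintro _ ⟨i, hiΛ, rfl⟩
      have hmem : b i ∈ Module.End.eigenspace T (ξ i) := Module.End.mem_eigenspace_iff.2 (hb i)
      exact Submodule.mem_iSup_of_mem (ξ i) (Submodule.mem_iSup_of_mem hiΛ hmem)
  have hproj : ∀ w : V, Sproj T Λ w = ∑ i ∈ F, ⟪b i, w⟫ • b i := by
    intro w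
    have h1 : Sproj T Λ w = ((ESub T Λ).orthogonalProjectionOnto w : V) := rfl
    rw [h1, ← Submodule.starProjection_apply]
    apply Submodule.eq_starProjection_of_mem_of_inner_eq_zero
    · rw [hESub]
      refine Submodule.sum_mem _ fun i hi => Submodule.smul_mem _ _ (Submodule.subset_span ⟨i, ?_, rfl⟩)
      exact (Finset.mem_filter.1 hi).2
    · intro u hu
      rw [hESub] at hu
      induction hu using Submodule.span_induction with
      | mem x hx =>
        obtain ⟨i, hiΛ, rfl⟩ := hx
        have hiF : i ∈ F := Finset.mem_filter.2 ⟨Finset.mem_univ i, hiΛ⟩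
        rw [inner_sub_left, real_inner_comm (b i) (∑ i ∈ F, ⟪b i, w⟫ • b i),
          b.orthonormal.inner_right_sum _ hiF, real_inner_comm, sub_self]
      | zero => simp
      | add x y hx hy ihx ihy => rw [inner_add_right, ihx, ihy, add_zero]
      | smul a x hx ihx => rw [real_inner_smul_right, ihx, mul_zero]
  have hcoord : ∀ (w : V) i, ⟪b i, w - Sproj T Λ w⟫ = if i ∈ F then 0 else ⟪b i, w⟫ := by
    intro w i
    rw [inner_sub_right, hproj, inner_sum]
    have : ∀ k ∈ F, ⟪b i, ⟪b k, w⟫ • b k⟫ = if i = k then ⟪b k, w⟫ else 0 := by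
      intro k _
      rw [real_inner_smul_right, orthonormal_iff_ite.1 b.orthonormal i k]
      simp [eq_comm]
    rw [Finset.sum_congr rfl this, Finset.sum_ite_eq F i (fun k => ⟪b k, w⟫)]
    by_cases hiF : i ∈ F <;> simp [hiF]
  have hTinvcoord : ∀ (w : V) i, ⟪b i, Tinv w⟫ = (ξ i)⁻¹ * ⟪b i, w⟫ := by
    intro w i
    have h1 : ⟪T (Tinv w), b i⟫ = ξ i * ⟪b i, Tinv w⟫ := hTb' (Tinv w) i
    rw [hTinv₁ w] at h1
    have h2 : ⟪b i, w⟫ = ξ i * ⟪b i, Tinv w⟫ := by rw [← h1, real_inner_comm]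
    rw [h2, inv_mul_cancel_left₀ (hξpos i).ne']
  -- C constants
  have hfin : ((specSet T \ Λ) ∪ {0} : Set ℝ).Finite := by
    apply Set.Finite.union
    · exact (Set.finite_range ξ).subset (fun x hx => hspec hx.1)
    · exact Set.finite_singleton 0
  have hbdd : ∀ m : ℝ, BddAbove ((fun t => t / |t - m|) '' ((specSet T \ Λ) ∪ {0})) :=
    fun m => (hfin.image _).bddAbove
  have hCle : ∀ jj : Fin r, Cconst T Λ (μ jj) ≤ CC := by
    intro jj
    rw [hCC]
    exact le_ciSup (f := fun j : Fin r => Cconst T Λ (μ j)) (Set.finite_range _).bddAbove jj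
  have hCc0 : ∀ jj : Fin r, 0 ≤ Cconst T Λ (μ jj) := by
    intro jj
    have h1 : (0:ℝ) = (fun t => t / |t - μ jj|) 0 := by simp
    rw [h1]
    exact le_csSup (hbdd (μ jj)) (Set.mem_image_of_mem _ (Set.mem_union_right _ rfl))
  have hCC0 : 0 ≤ CC := le_trans (hCc0 ⟨0, hr⟩) (hCle ⟨0, hr⟩)
  have hξΛ : ∀ i, i ∉ F → ξ i ∈ specSet T \ Λ := by
    intro i hiF
    refine ⟨hTsymm.hasEigenvalue_eigenvalues rfl i, ?_⟩
    simpa [hF] using hiF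
  have hkey : ∀ (jj : Fin r) i, i ∉ F → ξ i / |ξ i - μ jj| ≤ CC := by
    intro jj i hiF
    refine le_trans (le_trans ?_ (le_refl _)) (hCle jj)
    exact le_csSup (hbdd (μ jj)) (Set.mem_image_of_mem _ (Set.mem_union_left _ (hξΛ i hiF)))
  have hξne : ∀ (jj : Fin r) i, i ∉ F → ξ i - μ jj ≠ 0 := by
    intro jj i hiF h
    exact hμ jj (by rw [← sub_eq_zero.1 h]; exact hξΛ i hiF)
  have hterm : ∀ (jj : Fin r) i, i ∉ F →
      ξ i * ⟪b i, φ jj⟫ ^ 2 ≤ CC ^ 2 * (ξ i * ⟪b i, φ jj - μ jj • Tinv (φ jj)⟫ ^ 2) := by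
    intro jj i hiF
    have hne := hξne jj i hiF
    have hxi := hξpos i
    have hcoordr : ⟪b i, φ jj - μ jj • Tinv (φ jj)⟫ = ⟪b i, φ jj⟫ * ((ξ i - μ jj) / ξ i) := by
      rw [inner_sub_right, real_inner_smul_right, hTinvcoord]
      field_simp
    rw [hcoordr]
    have h2 : (ξ i / |ξ i - μ jj|) ^ 2 ≤ CC ^ 2 :=
      pow_le_pow_left₀ (by positivity) (hkey jj i hiF) 2
    rw [div_pow, sq_abs] at h2
    have heq : ξ i * ⟪b i, φ jj⟫ ^ 2
        = (ξ i ^ 2 / (ξ i - μ jj) ^ 2) * (ξ i * (⟪b i, φ jj⟫ * ((ξ i - μ jj) / ξ i)) ^ 2) := by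
      field_simp
    rw [heq]
    exact mul_le_mul_of_nonneg_right h2 (by positivity)
  -- Gram matrix
  have hGsymm : G.IsHermitian := by
    rw [Matrix.IsHermitian]
    ext i j
    simp only [Matrix.conjTranspose_apply, hG, star_trivial]
    rw [hTsymm (φ i) (φ j), real_inner_comm]
  have hquad : ∀ x : Fin r → ℝ, dotProduct x (G.mulVec x) = enormSq T (∑ j, x j • φ j) := by
    intro x
    rw [enormSq, map_sum, sum_inner]
    simp only [map_smul, real_inner_smul_left, inner_sum, real_inner_smul_right,
      Finset.mul_sum, dotProduct, Matrix.mulVec, hG]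
    rw [Finset.sum_comm]
    refine Finset.sum_congr rfl fun j _ => Finset.sum_congr rfl fun i _ => by ring
  have hsumfne : ∀ x : Fin r → ℝ, x ≠ 0 → (∑ j, x j • φ j) ≠ 0 := by
    intro x hx0 hz
    apply hx0
    funext j
    exact Fintype.linearIndependent_iff.1 hφli x hz j
  have hlampos : 0 < lamMin := by
    rw [spectrum.mem_iff] at hlam₁
    have hdet : (algebraMap ℝ (Matrix (Fin r) (Fin r) ℝ) lamMin - G).det = 0 := by
      by_contra hd
      exact hlam₁ ((Matrix.isUnit_iff_isUnit_det _).2 (isUnit_iff_ne_zero.2 hd))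
    obtain ⟨x, hx0, hxv⟩ := (Matrix.exists_mulVec_eq_zero_iff).2 hdet
    have hxG : G.mulVec x = lamMin • x := by
      have h1 : (algebraMap ℝ (Matrix (Fin r) (Fin r) ℝ) lamMin - G).mulVec x
          = lamMin • x - G.mulVec x := by
        rw [Matrix.sub_mulVec]
        congr 1
        rw [Algebra.algebraMap_eq_smul_one, Matrix.smul_mulVec, Matrix.one_mulVec]
      rw [hxv] at h1
      exact (sub_eq_zero.1 h1.symm).symm
    have hpos1 : 0 < dotProduct x (G.mulVec x) := by
      rw [hquad]
      exact hTpos _ (hsumfne x hx0)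
    rw [hxG] at hpos1
    have hxx : dotProduct x (lamMin • x) = lamMin * ∑ i, x i ^ 2 := by
      simp only [dotProduct, Pi.smul_apply, smul_eq_mul, Finset.mul_sum]
      exact Finset.sum_congr rfl fun i _ => by ring
    rw [hxx] at hpos1
    have hxxpos : 0 < ∑ i, x i ^ 2 := by
      have : ∃ i, x i ≠ 0 := by
        by_contra h
        push_neg at h
        exact hx0 (funext h)
      obtain ⟨i, hi⟩ := this
      exact Finset.sum_pos' (fun k _ => sq_nonneg _) ⟨i, Finset.mem_univ i, by positivity⟩
    by_contra hneg
    push_neg at hneg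
    nlinarith
  have hGram_lb : ∀ x : Fin r → ℝ,
      lamMin * (∑ j, x j ^ 2) ≤ dotProduct x (G.mulVec x) := by
    intro x
    have hHherm : (G - algebraMap ℝ (Matrix (Fin r) (Fin r) ℝ) lamMin).IsHermitian := by
      apply hGsymm.sub
      rw [Matrix.algebraMap_eq_diagonal]
      exact Matrix.isHermitian_diagonal _
    have hHpsd : (G - algebraMap ℝ (Matrix (Fin r) (Fin r) ℝ) lamMin).PosSemidef := by
      refine (Matrix.IsHermitian.posSemidef_iff_eigenvalues_nonneg hHherm).2 ?_
      intro i
      show (0:ℝ) ≤ _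
      have hmem := Matrix.IsHermitian.eigenvalues_mem_spectrum_real hHherm i
      rw [← spectrum.sub_singleton_eq] at hmem
      obtain ⟨y, hy, z, hz, hyz⟩ := Set.mem_sub.1 hmem
      rw [Set.mem_singleton_iff] at hz
      subst hz
      rw [← hyz]
      linarith [hlam₂ y hy]
    have h0 := Matrix.PosSemidef.dotProduct_mulVec_nonneg hHpsd x
    have hstar : star x = x := by
      funext i
      simp
    rw [hstar] at h0
    have hexp : dotProduct x ((G - algebraMap ℝ (Matrix (Fin r) (Fin r) ℝ) lamMin).mulVec x)
        = dotProduct x (G.mulVec x) - lamMin * ∑ j, x j ^ 2 := by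
      rw [Matrix.sub_mulVec, dotProduct_sub]
      congr 1
      rw [Algebra.algebraMap_eq_smul_one, Matrix.smul_mulVec, Matrix.one_mulVec]
      simp only [dotProduct, Pi.smul_apply, smul_eq_mul, Finset.mul_sum]
      exact Finset.sum_congr rfl fun i _ => by ring
    rw [hexp] at h0
    linarith
  -- decomposition of v
  rw [← hφspan] at hv
  obtain ⟨c, hc⟩ := (Submodule.mem_span_range_iff_exists_fun ℝ).1 hv
  have hcne : c ≠ 0 := by
    intro h
    apply hv0
    rw [← hc, h]
    simp
  set S2 := ∑ j, c j ^ 2 with hS2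
  have hS2pos : 0 < S2 := by
    have : ∃ j, c j ≠ 0 := by
      by_contra h
      push_neg at h
      exact hcne (funext h)
    obtain ⟨j, hj⟩ := this
    exact Finset.sum_pos' (fun k _ => sq_nonneg _) ⟨j, Finset.mem_univ j, by positivity⟩
  set R := ∑ j : Fin r, enormSq T (φ j - μ j • Tinv (φ j)) with hR
  have hRnn : 0 ≤ R := Finset.sum_nonneg fun j _ => henn _
  set g : Fin r → Fin (Module.finrank ℝ V) → ℝ :=
    fun j i => if i ∈ F then 0 else ⟪b i, φ j⟫ with hg
  have hdv : ∀ i, ⟪b i, v - Sproj T Λ v⟫ = ∑ j, c j * g j i := by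
    intro i
    rw [hcoord v i]
    by_cases hiF : i ∈ F
    · simp [hg, hiF]
    · simp only [hg, if_neg hiF]
      rw [← hc, inner_sum]
      exact Finset.sum_congr rfl fun j _ => real_inner_smul_right _ _ _
  have hnum : enormSq T (v - Sproj T Λ v) ≤ S2 * (CC ^ 2 * R) := by
    rw [henorm]
    calc ∑ i, ξ i * ⟪b i, v - Sproj T Λ v⟫ ^ 2
        ≤ ∑ i, S2 * (ξ i * ∑ j, g j i ^ 2) := by
          refine Finset.sum_le_sum fun i _ => ?_
          rw [hdv i]
          have hcs := Finset.sum_mul_sq_le_sq_mul_sq Finset.univ c (fun j => g j i)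
          calc ξ i * (∑ j, c j * g j i) ^ 2
              ≤ ξ i * (S2 * ∑ j, g j i ^ 2) :=
                mul_le_mul_of_nonneg_left hcs (hξpos i).le
            _ = S2 * (ξ i * ∑ j, g j i ^ 2) := by ring
      _ = S2 * ∑ j, (∑ i, ξ i * g j i ^ 2) := by
          rw [← Finset.mul_sum]
          congr 1
          simp_rw [Finset.mul_sum]
          exact Finset.sum_comm
      _ ≤ S2 * ∑ j, CC ^ 2 * enormSq T (φ j - μ j • Tinv (φ j)) := by
          refine mul_le_mul_of_nonneg_left (Finset.sum_le_sum fun j _ => ?_) hS2pos.le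
          rw [henorm, Finset.mul_sum]
          refine Finset.sum_le_sum fun i _ => ?_
          by_cases hiF : i ∈ F
          · simp only [hg, if_pos hiF]
            have h1 : 0 ≤ CC ^ 2 * (ξ i * ⟪b i, φ j - μ j • Tinv (φ j)⟫ ^ 2) :=
              mul_nonneg (sq_nonneg _) (mul_nonneg (hξpos i).le (sq_nonneg _))
            simpa using h1
          · simp only [hg, if_neg hiF]
            exact hterm j i hiF
      _ = S2 * (CC ^ 2 * R) := by rw [hR, ← Finset.mul_sum]
  have hden : lamMin * S2 ≤ enormSq T v := by
    have h := hGram_lb c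
    rwa [hquad c, hc] at h
  have hdpos : 0 < lamMin * S2 := mul_pos hlampos hS2pos
  have hnumnn : 0 ≤ S2 * (CC ^ 2 * R) := by positivity
  calc enormSq T (v - Sproj T Λ v) / enormSq T v
      ≤ (S2 * (CC ^ 2 * R)) / (lamMin * S2) := div_le_div₀ hnumnn hnum hdpos hden
    _ = CC ^ 2 / lamMin * R := by
        field_simp
end
end

section
/- Let K = Spec(H,G) and K̃ = Spec(H̃,G). Then the Hausdorff distance dist(K,K̃) = max{ max_{κ̃∈K̃} min_{κ∈K} |κ−κ̃| , max_{κ∈K} min_{κ̃∈K̃} |κ−κ̃| } satisfies dist(K,K̃) ≤ ‖G^{-1/2}‖₂² · ‖H − H̃‖₂. -/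
open Matrix

noncomputable section

/-- `Spec(H,G)`: the set of generalized eigenvalues of the pair `(H,G)`,
i.e. real `κ` with `H x = κ G x` for some nonzero `x`. -/
def genSpec {r : ℕ} (H G : Matrix (Fin r) (Fin r) ℝ) : Set ℝ :=
  {κ : ℝ | ∃ x : Fin r → ℝ, x ≠ 0 ∧ H.mulVec x = κ • G.mulVec x}

/-- The spectral norm `‖M‖₂`: the operator norm induced by the Euclidean vector norm. -/
def spectralNorm2 {r : ℕ} (M : Matrix (Fin r) (Fin r) ℝ) : ℝ :=
  ‖Matrix.toEuclideanCLM (𝕜 := ℝ) M‖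

/-- The Hausdorff distance
`dist(K,K̃) = max{ max_{κ̃∈K̃} min_{κ∈K} |κ−κ̃| , max_{κ∈K} min_{κ̃∈K̃} |κ−κ̃| }`. -/
def hausDist (K Kt : Set ℝ) : ℝ :=
  max (sSup ((fun κt => sInf ((fun κ => |κ - κt|) '' K)) '' Kt))
      (sSup ((fun κ => sInf ((fun κt => |κ - κt|) '' Kt)) '' K))

/-- Characterization of the generalized spectrum via the symmetrized matrix. -/
lemma genSpec_iff_aux {r : ℕ} (G H : Matrix (Fin r) (Fin r) ℝ)
    (hG : G.PosDef) (Gis : Matrix (Fin r) (Fin r) ℝ) (hGis : Gis.PosDef)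
    (hGisSq : Gis * Gis = G⁻¹) (κ : ℝ) :
    κ ∈ genSpec H G ↔ ∃ w : Fin r → ℝ, w ≠ 0 ∧ (Gis * H * Gis) *ᵥ w = κ • w := by
  have hGd : IsUnit G.det := hG.det_pos.ne'.isUnit
  have hGisd : IsUnit Gis.det := hGis.det_pos.ne'.isUnit
  have hGG : G * (Gis * Gis) = 1 := by rw [hGisSq, mul_nonsing_inv _ hGd]
  have hGG' : (Gis * Gis) * G = 1 := by rw [hGisSq, nonsing_inv_mul _ hGd]
  have hinj : Function.Injective (Gis.mulVec) := by
    intro a b hab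
    have := congrArg (Gis⁻¹.mulVec) hab
    simpa [mulVec_mulVec, nonsing_inv_mul _ hGisd] using this
  constructor
  · rintro ⟨x, hx, hHx⟩
    refine ⟨(Gis⁻¹) *ᵥ x, ?_, ?_⟩
    · intro h0
      apply hx
      have := congrArg (Gis.mulVec) h0
      simpa [mulVec_mulVec, mul_nonsing_inv _ hGisd] using this
    · apply hinj
      rw [mulVec_mulVec, mulVec_smul, mulVec_mulVec]
      have h1 : Gis * (Gis * H * Gis) * Gis⁻¹ = Gis * Gis * H * (Gis * Gis⁻¹) := by
        noncomm_ring
      rw [h1, mul_nonsing_inv _ hGisd, mul_one]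
      have h3 : (Gis * Gis * H) *ᵥ x = (Gis*Gis) *ᵥ (H *ᵥ x) := by rw [mulVec_mulVec]
      rw [h3, hHx, mulVec_smul, mulVec_mulVec, hGG', one_mulVec, mulVec_mulVec,
        mul_nonsing_inv _ hGisd, one_mulVec]
  · rintro ⟨w, hw, hAw⟩
    refine ⟨Gis *ᵥ w, fun h0 => hw (hinj (by simpa using h0)), ?_⟩
    have := congrArg (fun v => (G * Gis) *ᵥ v) hAw
    simp only [mulVec_mulVec, mulVec_smul] at this ⊢
    have h2 : G * Gis * (Gis * H * Gis) = (G * (Gis * Gis)) * (H * Gis) := by noncomm_ring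
    rw [h2, hGG, one_mul] at this
    exact this

/-- Bauer–Fike for a Hermitian matrix `A`: any eigenvalue of `B` is within
`‖A - B‖₂` of some eigenvalue of `A`. -/
lemma bauer_fike {r : ℕ} (A B : Matrix (Fin r) (Fin r) ℝ) (hA : A.IsHermitian) (κt : ℝ)
    (w : Fin r → ℝ) (hw : w ≠ 0) (hweq : B *ᵥ w = κt • w) :
    ∃ i : Fin r, |hA.eigenvalues i - κt| ≤ spectralNorm2 (A - B) := by
  have hr : Nonempty (Fin r) := by
    by_contra h
    exact hw (funext fun i => absurd ⟨i⟩ h)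
  set b := hA.eigenvectorBasis with hb
  set μ := hA.eigenvalues with hμ
  obtain ⟨i₀, -, hmin⟩ := Finset.exists_min_image Finset.univ (fun i => |μ i - κt|)
    ⟨hr.some, Finset.mem_univ _⟩
  refine ⟨i₀, ?_⟩
  set δ := |μ i₀ - κt| with hδ
  have hδ0 : 0 ≤ δ := abs_nonneg _
  set W : EuclideanSpace ℝ (Fin r) := (WithLp.equiv 2 _).symm w with hW
  set V : EuclideanSpace ℝ (Fin r) := (WithLp.equiv 2 _).symm ((A - B) *ᵥ w) with hV
  have hWne : W ≠ 0 := by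
    intro h; apply hw
    have := congrArg (WithLp.equiv 2 (Fin r → ℝ)) h
    simpa [hW] using this
  have hT : Aᵀ = A := by
    rw [← conjTranspose_eq_transpose_of_trivial]; exact hA.eq
  have hinner : ∀ (u : EuclideanSpace ℝ (Fin r)) (v : Fin r → ℝ),
      (inner ℝ u ((WithLp.equiv 2 (Fin r → ℝ)).symm v) : ℝ)
        = (WithLp.equiv 2 (Fin r → ℝ)) u ⬝ᵥ v := by
    intro u v
    simp [PiLp.inner_apply, RCLike.inner_apply, dotProduct, mul_comm]
  have hcoord : ∀ i, b.repr V i = (μ i - κt) * b.repr W i := by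
    intro i
    rw [b.repr_apply_apply V i, b.repr_apply_apply W i, hV, hW, hinner, hinner]
    set bi : Fin r → ℝ := (WithLp.equiv 2 (Fin r → ℝ)) (b i) with hbi
    have hAi : A *ᵥ bi = μ i • bi := hA.mulVec_eigenvectorBasis i
    have h1 : bi ⬝ᵥ (A *ᵥ w) = μ i * (bi ⬝ᵥ w) := by
      rw [dotProduct_mulVec, ← mulVec_transpose, hT, hAi, smul_dotProduct]
      rfl
    rw [sub_mulVec, dotProduct_sub, hweq, h1, dotProduct_smul]
    simp only [smul_eq_mul]
    ring
  have hnormsq : ∀ (v : EuclideanSpace ℝ (Fin r)),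
      ‖v‖ ^ 2 = ∑ i, (b.repr v i) ^ 2 := by
    intro v
    have h1 : (inner ℝ v v : ℝ) = ‖v‖ ^ 2 := real_inner_self_eq_norm_sq v
    have h2 : (inner ℝ (b.repr v) (b.repr v) : ℝ) = inner ℝ v v := b.repr.inner_map_map v v
    rw [← h1, ← h2, PiLp.inner_apply]
    simp [RCLike.inner_apply, sq]
  have hsum : δ ^ 2 * ‖W‖ ^ 2 ≤ ‖V‖ ^ 2 := by
    rw [hnormsq V, hnormsq W, Finset.mul_sum]
    apply Finset.sum_le_sum
    intro i _
    rw [hcoord i, mul_pow]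
    have h3 : δ ^ 2 ≤ (μ i - κt) ^ 2 := by
      rw [← sq_abs (μ i - κt), ← sq_abs δ, abs_abs]
      exact pow_le_pow_left₀ hδ0 (hmin i (Finset.mem_univ i)) 2
    exact mul_le_mul_of_nonneg_right h3 (sq_nonneg _)
  have hVle : ‖V‖ ≤ spectralNorm2 (A - B) * ‖W‖ := by
    have : V = (Matrix.toEuclideanCLM (𝕜 := ℝ) (A - B)) W := by
      rw [hW, hV]; rfl
    rw [this]
    exact (Matrix.toEuclideanCLM (𝕜 := ℝ) (A - B)).le_opNorm W
  have hWpos : 0 < ‖W‖ := norm_pos_iff.mpr hWne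
  have hfin : δ * ‖W‖ ≤ spectralNorm2 (A - B) * ‖W‖ := by
    have h4 : (δ * ‖W‖) ^ 2 ≤ ‖V‖ ^ 2 := by rw [mul_pow]; exact hsum
    have h5 : δ * ‖W‖ ≤ ‖V‖ := by
      have := Real.sqrt_le_sqrt h4
      rwa [Real.sqrt_sq (by positivity), Real.sqrt_sq (norm_nonneg _)] at this
    exact h5.trans hVle
  exact le_of_mul_le_mul_right hfin hWpos

/-- One-sided Bauer–Fike estimate for generalized spectra. -/
lemma key_lemma {r : ℕ} (G H Ht : Matrix (Fin r) (Fin r) ℝ)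
    (hG : G.PosDef) (hH : H.IsHermitian)
    (Gis : Matrix (Fin r) (Fin r) ℝ) (hGis : Gis.PosDef) (hGisSq : Gis * Gis = G⁻¹) :
    ∀ κt ∈ genSpec Ht G, ∃ κ ∈ genSpec H G,
      |κ - κt| ≤ spectralNorm2 Gis ^ 2 * spectralNorm2 (H - Ht) := by
  intro κt hκt
  obtain ⟨w, hw, hweq⟩ := (genSpec_iff_aux G Ht hG Gis hGis hGisSq κt).mp hκt
  have hAH : (Gis * H * Gis).IsHermitian := by
    have h1 := hGis.1.eq
    have h2 := hH.eq
    unfold Matrix.IsHermitian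
    rw [conjTranspose_mul, conjTranspose_mul, h1, h2, mul_assoc]
  obtain ⟨i, hi⟩ := bauer_fike (Gis * H * Gis) (Gis * Ht * Gis) hAH κt w hw hweq
  refine ⟨hAH.eigenvalues i, ?_, ?_⟩
  · rw [genSpec_iff_aux G H hG Gis hGis hGisSq]
    refine ⟨(WithLp.equiv 2 (Fin r → ℝ)) (hAH.eigenvectorBasis i), ?_,
      hAH.mulVec_eigenvectorBasis i⟩
    intro h0
    apply hAH.eigenvectorBasis.orthonormal.ne_zero i
    have := congrArg (WithLp.equiv 2 (Fin r → ℝ)).symm h0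
    simpa using this
  · refine hi.trans ?_
    have hdiff : Gis * H * Gis - Gis * Ht * Gis = Gis * (H - Ht) * Gis := by
      noncomm_ring
    rw [hdiff]
    unfold spectralNorm2
    rw [_root_.map_mul, _root_.map_mul]
    calc ‖Matrix.toEuclideanCLM (𝕜 := ℝ) Gis * Matrix.toEuclideanCLM (𝕜 := ℝ) (H - Ht) *
            Matrix.toEuclideanCLM (𝕜 := ℝ) Gis‖
        ≤ ‖Matrix.toEuclideanCLM (𝕜 := ℝ) Gis * Matrix.toEuclideanCLM (𝕜 := ℝ) (H - Ht)‖ *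
            ‖Matrix.toEuclideanCLM (𝕜 := ℝ) Gis‖ := norm_mul_le _ _
      _ ≤ ‖Matrix.toEuclideanCLM (𝕜 := ℝ) Gis‖ * ‖Matrix.toEuclideanCLM (𝕜 := ℝ) (H - Ht)‖ *
            ‖Matrix.toEuclideanCLM (𝕜 := ℝ) Gis‖ :=
          mul_le_mul_of_nonneg_right (norm_mul_le _ _) (norm_nonneg _)
      _ = ‖Matrix.toEuclideanCLM (𝕜 := ℝ) Gis‖ ^ 2 * ‖Matrix.toEuclideanCLM (𝕜 := ℝ) (H - Ht)‖ := by
          ring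

/-- estimate (2.13), Hausdorff-distance form of Bauer–Fike:
with `K = Spec(H,G)` and `K̃ = Spec(H̃,G)`,
`dist(K,K̃) ≤ ‖G^{-1/2}‖₂² · ‖H − H̃‖₂`. -/
theorem stmt_4 {r : ℕ} (G H Ht : Matrix (Fin r) (Fin r) ℝ)
    (hG : G.PosDef) (hH : H.PosSemidef) (hHt : Ht.PosSemidef)
    (Gis : Matrix (Fin r) (Fin r) ℝ) (hGis : Gis.PosDef) (hGisSq : Gis * Gis = G⁻¹) :
    hausDist (genSpec H G) (genSpec Ht G)
      ≤ spectralNorm2 Gis ^ 2 * spectralNorm2 (H - Ht) := by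
  set ε := spectralNorm2 Gis ^ 2 * spectralNorm2 (H - Ht) with hε
  have hε0 : 0 ≤ ε := by
    rw [hε]
    exact mul_nonneg (pow_nonneg (norm_nonneg _) 2) (norm_nonneg _)
  have hneg : spectralNorm2 (Ht - H) = spectralNorm2 (H - Ht) := by
    unfold spectralNorm2
    rw [show Ht - H = -(H - Ht) from (neg_sub H Ht).symm, map_neg, norm_neg]
  have hbdd : ∀ (S : Set ℝ) (c : ℝ), BddBelow ((fun κ => |κ - c|) '' S) := by
    intro S c
    refine ⟨0, ?_⟩
    rintro z ⟨κ', -, rfl⟩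
    exact abs_nonneg _
  rw [hausDist]
  apply max_le
  · apply Real.sSup_le _ hε0
    rintro y ⟨κt, hκt, rfl⟩
    obtain ⟨κ, hκ, hle⟩ := key_lemma G H Ht hG hH.1 Gis hGis hGisSq κt hκt
    exact (csInf_le (hbdd _ _) ⟨κ, hκ, rfl⟩).trans hle
  · apply Real.sSup_le _ hε0
    rintro y ⟨κ, hκ, rfl⟩
    obtain ⟨κt, hκt, hle⟩ := key_lemma G Ht H hG hHt.1 Gis hGis hGisSq κ hκ
    rw [hneg] at hle
    have hb2 : BddBelow ((fun κt' => |κ - κt'|) '' genSpec Ht G) := by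
      refine ⟨0, ?_⟩
      rintro z ⟨a, -, rfl⟩
      exact abs_nonneg _
    refine (csInf_le hb2 ⟨κt, hκt, rfl⟩).trans ?_
    show |κ - κt| ≤ ε
    rw [abs_sub_comm]
    exact hle
end
end

section
/- Let μ̂ > 0 with μ̂ ∉ Spec(T)\Λ, and let φ̂ ∈ V. Then ‖(I−S)φ̂‖_B ≤ C(μ̂,Λ) · ‖φ̂ − μ̂ T⁻¹ φ̂‖_B. -/
open scoped RealInnerProductSpace

noncomputable section

variable {V : Type*} [NormedAddCommGroup V] [InnerProductSpace ℝ V]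

/-- estimate (2.3) in the energy norm:
`‖(I−S)φ̂‖_B ≤ C(μ̂,Λ) · ‖φ̂ − μ̂ T⁻¹ φ̂‖_B`. -/
theorem stmt_5 [FiniteDimensional ℝ V]
    (T Tinv : V →ₗ[ℝ] V) (hTsymm : T.IsSymmetric)
    (hTpos : ∀ v : V, v ≠ 0 → 0 < ⟪T v, v⟫)
    (hTinv₁ : ∀ v, T (Tinv v) = v) (hTinv₂ : ∀ v, Tinv (T v) = v)
    (Λ : Set ℝ) (hΛ : Λ ⊆ specSet T)
    (μ : ℝ) (hμpos : 0 < μ) (hμ : μ ∉ specSet T \ Λ)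
    (φ : V) :
    enorm T (φ - Sproj T Λ φ) ≤ Cconst T Λ μ * enorm T (φ - μ • Tinv φ) := by
  classical
  have hn : Module.finrank ℝ V = Module.finrank ℝ V := rfl
  set b := hTsymm.eigenvectorBasis hn with hbdef
  set ev := hTsymm.eigenvalues hn with hevdef
  have hb_eig : ∀ i, T (b i) = ev i • b i := fun i => hTsymm.apply_eigenvectorBasis hn i
  have hbne : ∀ i, b i ≠ 0 := fun i => by
    simpa using b.toBasis.ne_zero i
  have hbnorm : ∀ i, ⟪b i, b i⟫ = 1 := fun i => by
    rw [real_inner_self_eq_norm_sq, b.orthonormal.1 i]; norm_num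
  have hev_pos : ∀ i, 0 < ev i := fun i => by
    have h := hTpos (b i) (hbne i)
    rw [hb_eig i, real_inner_smul_left, hbnorm i] at h
    linarith
  -- coordinate action of T
  have hcoord : ∀ i (v : V), ⟪b i, T v⟫ = ev i * ⟪b i, v⟫ := fun i v => by
    rw [← hTsymm (b i) v, hb_eig i, real_inner_smul_left]
  -- the spectrum is contained in the range of the eigenvalues
  have hspec : specSet T ⊆ Set.range ev := by
    intro ξ hξ
    by_contra hr
    obtain ⟨v, hv⟩ := (hξ : Module.End.HasEigenvalue T ξ).exists_hasEigenvector
    have hTv : T v = ξ • v := hv.apply_eq_smul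
    have hz : ∀ i, ⟪b i, v⟫ = 0 := by
      intro i
      have h1 : ev i * ⟪b i, v⟫ = ξ * ⟪b i, v⟫ := by
        have h2 := hcoord i v
        rw [hTv, real_inner_smul_right] at h2
        linarith
      have hne : ev i - ξ ≠ 0 := sub_ne_zero.mpr fun h => hr ⟨i, h⟩
      have h3 : (ev i - ξ) * ⟪b i, v⟫ = 0 := by ring_nf; linarith [h1]
      exact (mul_eq_zero.mp h3).resolve_left hne
    exact hv.2 (by rw [← b.sum_repr' v]; simp [hz])
  -- energy formula
  have henergy : ∀ v : V, ⟪T v, v⟫ = ∑ i, ev i * ⟪b i, v⟫ ^ 2 := by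
    intro v
    rw [← b.sum_inner_mul_inner (T v) v]
    refine Finset.sum_congr rfl fun i _ => ?_
    rw [real_inner_comm (b i) (T v), hcoord i v]
    ring
  -- membership and orthogonality of eigenvectors w.r.t. E(Λ)
  have hmemE : ∀ i, ev i ∈ Λ → b i ∈ ESub T Λ := fun i hi =>
    (le_iSup₂ (f := fun ξ (_ : ξ ∈ Λ) => Module.End.eigenspace T ξ) (ev i) hi)
      (Module.End.mem_eigenspace_iff.mpr (hb_eig i))
  have horth : ∀ i, ev i ∉ Λ → ∀ u ∈ ESub T Λ, ⟪u, b i⟫ = 0 := by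
    intro i hi u hu
    rw [ESub, iSup_subtype'] at hu
    refine Submodule.iSup_induction (motive := fun u => ⟪u, b i⟫ = 0) _ hu
      (fun ξ x hx => ?_) (by simp) (fun x y hx hy => by show ⟪x + y, b i⟫ = 0; rw [inner_add_left, hx, hy, add_zero])
    have hTx : T x = (ξ : ℝ) • x := Module.End.mem_eigenspace_iff.mp hx
    have h1 : (ξ : ℝ) * ⟪x, b i⟫ = ev i * ⟪x, b i⟫ := by
      have h2 : ⟪T x, b i⟫ = ⟪x, T (b i)⟫ := hTsymm x (b i)
      rw [hTx, hb_eig i, real_inner_smul_left, real_inner_smul_right] at h2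
      exact h2
    have hne : (ξ : ℝ) - ev i ≠ 0 := sub_ne_zero.mpr fun h => hi (h ▸ ξ.2)
    have h3 : ((ξ : ℝ) - ev i) * ⟪x, b i⟫ = 0 := by ring_nf; linarith [h1]
    exact (mul_eq_zero.mp h3).resolve_left hne
  -- projection facts
  have hSeq : Sproj T Λ φ = ↑((ESub T Λ).orthogonalProjectionOnto φ) := rfl
  have hSmem : Sproj T Λ φ ∈ ESub T Λ := by rw [hSeq]; exact ((ESub T Λ).orthogonalProjectionOnto φ).2
  have hworth : φ - Sproj T Λ φ ∈ (ESub T Λ)ᗮ := by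
    rw [hSeq]; exact Submodule.sub_starProjection_mem_orthogonal φ
  have hw : ∀ i, ⟪b i, φ - Sproj T Λ φ⟫ = if ev i ∈ Λ then 0 else ⟪b i, φ⟫ := by
    intro i
    by_cases hi : ev i ∈ Λ
    · simp only [hi, if_true]
      exact (Submodule.mem_orthogonal _ _).mp hworth (b i) (hmemE i hi)
    · simp only [hi, if_false]
      rw [inner_sub_right, real_inner_comm (Sproj T Λ φ) (b i),
        horth i hi _ hSmem, sub_zero]
  -- coordinates of the residual
  have hTinvb : ∀ i, Tinv (b i) = (ev i)⁻¹ • b i := by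
    intro i
    have h := congrArg Tinv (hb_eig i)
    rw [hTinv₂, map_smul] at h
    conv_rhs => rw [h]
    rw [smul_smul, inv_mul_cancel₀ (hev_pos i).ne', one_smul]
  have hr_coord : ∀ i, ⟪b i, φ - μ • Tinv φ⟫ = (1 - μ / ev i) * ⟪b i, φ⟫ := by
    intro i
    have h1 : ⟪b i, Tinv φ⟫ = (ev i)⁻¹ * ⟪b i, φ⟫ := by
      conv_lhs => rw [← hTinv₁ (b i)]
      rw [hTsymm, hTinv₁, hTinvb i, real_inner_smul_left]
    rw [inner_sub_right, real_inner_smul_right, h1]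
    field_simp
  -- properties of the constant C
  have hfin : ((fun ξ => ξ / |ξ - μ|) '' ((specSet T \ Λ) ∪ {0})).Finite :=
    ((((Set.finite_range ev).subset hspec).diff (t := Λ)).union (Set.finite_singleton 0)).image _
  have hbddA := hfin.bddAbove
  have hC0 : 0 ≤ Cconst T Λ μ := by
    have h0 : (0 : ℝ) / |0 - μ| ∈ (fun ξ => ξ / |ξ - μ|) '' ((specSet T \ Λ) ∪ {0}) :=
      Set.mem_image_of_mem _ (Or.inr rfl)
    have := le_csSup hbddA h0
    rw [zero_div] at this
    exact this
  have hCb : ∀ i, ev i ∉ Λ → ev i ≤ Cconst T Λ μ * |ev i - μ| := by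
    intro i hi
    have hmem : ev i ∈ specSet T \ Λ := ⟨hTsymm.hasEigenvalue_eigenvalues hn i, hi⟩
    have h1 : ev i / |ev i - μ| ≤ Cconst T Λ μ :=
      le_csSup hbddA (Set.mem_image_of_mem _ (Or.inl hmem))
    have hne : ev i ≠ μ := fun h => hμ (h ▸ hmem)
    have habs : 0 < |ev i - μ| := abs_pos.mpr (sub_ne_zero.mpr hne)
    calc ev i = ev i / |ev i - μ| * |ev i - μ| := by field_simp
    _ ≤ Cconst T Λ μ * |ev i - μ| := by
        exact mul_le_mul_of_nonneg_right h1 habs.le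
  -- the main comparison of squared energy norms
  set C := Cconst T Λ μ with hCdef
  have hsq : ⟪T (φ - Sproj T Λ φ), φ - Sproj T Λ φ⟫ ≤
      C ^ 2 * ⟪T (φ - μ • Tinv φ), φ - μ • Tinv φ⟫ := by
    rw [henergy, henergy, Finset.mul_sum]
    refine Finset.sum_le_sum fun i _ => ?_
    rw [hw i, hr_coord i]
    by_cases hi : ev i ∈ Λ
    · simp only [hi, if_true]
      have h1 : (0:ℝ) ≤ ev i * ((1 - μ / ev i) * ⟪b i, φ⟫) ^ 2 :=
        mul_nonneg (hev_pos i).le (sq_nonneg _)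
      nlinarith [sq_nonneg C]
    · simp only [hi, if_false]
      have hξ := hev_pos i
      have habs := hCb i hi
      have key : ev i ^ 2 ≤ C ^ 2 * (ev i - μ) ^ 2 := by
        nlinarith [sq_abs (ev i - μ), abs_nonneg (ev i - μ),
          mul_le_mul habs habs hξ.le (mul_nonneg hC0 (abs_nonneg _))]
      have key2 : ev i ^ 2 * ⟪b i, φ⟫ ^ 2 ≤ C ^ 2 * (ev i - μ) ^ 2 * ⟪b i, φ⟫ ^ 2 :=
        mul_le_mul_of_nonneg_right key (sq_nonneg _)
      have hgoal : C ^ 2 * (ev i * ((1 - μ / ev i) * ⟪b i, φ⟫) ^ 2) =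
          C ^ 2 * (ev i - μ) ^ 2 * ⟪b i, φ⟫ ^ 2 / ev i := by
        field_simp
      rw [hgoal, le_div_iff₀ hξ]
      nlinarith [key2]
  -- conclude via square roots
  calc enorm T (φ - Sproj T Λ φ)
      = Real.sqrt ⟪T (φ - Sproj T Λ φ), φ - Sproj T Λ φ⟫ := rfl
    _ ≤ Real.sqrt (C ^ 2 * ⟪T (φ - μ • Tinv φ), φ - μ • Tinv φ⟫) := Real.sqrt_le_sqrt hsq
    _ = C * enorm T (φ - μ • Tinv φ) := by
        rw [Real.sqrt_mul (sq_nonneg C), Real.sqrt_sq hC0]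
        rfl
end
end

section
/- Let μ̂ > 0 with μ̂ ∉ Spec(T)\Λ, and let φ̂ ∈ V. Then ‖(I−S)φ̂‖ ≤ C(μ̂,Λ) · ‖φ̂ − μ̂ T⁻¹ φ̂‖, where ‖·‖ is the norm of the ambient inner product. -/
open scoped RealInnerProductSpace

noncomputable section

variable {V : Type*} [NormedAddCommGroup V] [InnerProductSpace ℝ V]

/-- estimate (2.3) in the ambient (L²-type) norm:
`‖(I−S)φ̂‖ ≤ C(μ̂,Λ) · ‖φ̂ − μ̂ T⁻¹ φ̂‖`. -/
theorem stmt_6 [FiniteDimensional ℝ V]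
    (T Tinv : V →ₗ[ℝ] V) (hTsymm : T.IsSymmetric)
    (hTpos : ∀ v : V, v ≠ 0 → 0 < ⟪T v, v⟫)
    (hTinv₁ : ∀ v, T (Tinv v) = v) (hTinv₂ : ∀ v, Tinv (T v) = v)
    (Λ : Set ℝ) (hΛ : Λ ⊆ specSet T)
    (μ : ℝ) (hμpos : 0 < μ) (hμ : μ ∉ specSet T \ Λ)
    (φ : V) :
    ‖φ - Sproj T Λ φ‖ ≤ Cconst T Λ μ * ‖φ - μ • Tinv φ‖ := by
  classical
  have hn : Module.finrank ℝ V = Module.finrank ℝ V := rfl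
  set b := hTsymm.eigenvectorBasis hn with hb
  set lam := hTsymm.eigenvalues hn with hlam
  have hbasis : ∀ i, T (b i) = lam i • b i := fun i => hTsymm.apply_eigenvectorBasis hn i
  have hbne : ∀ i, b i ≠ 0 := fun i => by
    simpa using b.toBasis.ne_zero i
  have hbnorm : ∀ i, ‖b i‖ = 1 := fun i => b.orthonormal.1 i
  -- positivity of eigenvalues
  have hlampos : ∀ i, 0 < lam i := by
    intro i
    have h := hTpos (b i) (hbne i)
    rw [hbasis i, real_inner_smul_left, real_inner_self_eq_norm_sq, hbnorm i] at h
    simpa using h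
  -- orthogonality of eigenvectors of distinct eigenvalues
  have horth : ∀ (ν : ℝ) (u : V) (i : Fin (Module.finrank ℝ V)),
      u ∈ Module.End.eigenspace T ν → ν ≠ lam i → ⟪b i, u⟫ = 0 := by
    intro ν u i hu hne
    have h1 : T u = ν • u := Module.End.mem_eigenspace_iff.mp hu
    have h2 : lam i * ⟪b i, u⟫ = ν * ⟪b i, u⟫ := by
      calc lam i * ⟪b i, u⟫ = ⟪lam i • b i, u⟫ := (real_inner_smul_left _ _ _).symm
        _ = ⟪T (b i), u⟫ := by rw [hbasis]
        _ = ⟪b i, T u⟫ := hTsymm _ _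
        _ = ⟪b i, ν • u⟫ := by rw [h1]
        _ = ν * ⟪b i, u⟫ := real_inner_smul_right _ _ _
    have h3 : (lam i - ν) * ⟪b i, u⟫ = 0 := by linarith
    rcases mul_eq_zero.mp h3 with h | h
    · exact absurd (by linarith : ν = lam i) hne
    · exact h
  -- the spectrum is contained in the range of the eigenvalue sequence
  have hspec : specSet T ⊆ Set.range lam := by
    intro ξ hξ
    by_contra hne
    obtain ⟨v, hv⟩ := Module.End.HasEigenvalue.exists_hasEigenvector hξ
    have hz : ∀ i, ⟪b i, v⟫ = 0 := fun i =>
      horth ξ v i hv.1 (fun h => hne ⟨i, h.symm⟩)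
    have : v = 0 := by
      have := b.sum_repr v
      simp only [b.repr_apply_apply, hz, zero_smul, Finset.sum_const_zero] at this
      exact this.symm
    exact hv.2 this
  -- C is an upper bound and nonnegative
  have hfin : (((fun ξ => ξ / |ξ - μ|) '' ((specSet T \ Λ) ∪ {0})) : Set ℝ).Finite := by
    apply Set.Finite.image
    apply Set.Finite.subset ((Set.finite_range lam).union (Set.finite_singleton 0))
    rintro x (hx | hx)
    · exact Or.inl (hspec hx.1)
    · exact Or.inr hx
  have hCmem : ∀ i, lam i ∉ Λ → lam i / |lam i - μ| ≤ Cconst T Λ μ := by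
    intro i hi
    apply le_csSup hfin.bddAbove
    exact ⟨lam i, Or.inl ⟨(hTsymm.hasEigenvalue_eigenvalues hn i : _), hi⟩, rfl⟩
  have hC0 : 0 ≤ Cconst T Λ μ := by
    have : (0 : ℝ) / |0 - μ| ≤ Cconst T Λ μ :=
      le_csSup hfin.bddAbove ⟨0, Or.inr rfl, rfl⟩
    simpa using this
  -- Tinv on basis vectors
  have hTinvb : ∀ i, Tinv (b i) = (lam i)⁻¹ • b i := by
    intro i
    have h := congrArg Tinv (hbasis i)
    rw [hTinv₂, map_smul] at h
    have h2 := congrArg (fun x => (lam i)⁻¹ • x) h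
    simpa [smul_smul, inv_mul_cancel₀ (hlampos i).ne', eq_comm] using h2
  -- Tinv is symmetric
  have hTinvsymm : ∀ u v : V, ⟪Tinv u, v⟫ = ⟪u, Tinv v⟫ := by
    intro u v
    calc ⟪Tinv u, v⟫ = ⟪Tinv u, T (Tinv v)⟫ := by rw [hTinv₁]
      _ = ⟪T (Tinv u), Tinv v⟫ := (hTsymm _ _).symm
      _ = ⟪u, Tinv v⟫ := by rw [hTinv₁]
  -- coordinates of φ - Sφ
  have hSmem : (Sproj T Λ φ) ∈ ESub T Λ := by
    simp only [Sproj, LinearMap.coe_comp, Function.comp_apply, Submodule.coe_subtype]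
    exact ((ESub T Λ).orthogonalProjectionOnto φ).2
  have r1 : ∀ i, b.repr (φ - Sproj T Λ φ) i =
      if lam i ∈ Λ then 0 else b.repr φ i := by
    intro i
    by_cases hmem : lam i ∈ Λ
    · have hbmem : b i ∈ ESub T Λ := by
        have h1 : b i ∈ Module.End.eigenspace T (lam i) :=
          (hTsymm.hasEigenvector_eigenvectorBasis hn i).1
        exact le_iSup₂ (f := fun ν (_ : ν ∈ Λ) => Module.End.eigenspace T ν) (lam i) hmem h1
      have hsub : φ - Sproj T Λ φ ∈ (ESub T Λ)ᗮ := by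
        have := Submodule.sub_starProjection_mem_orthogonal (K := ESub T Λ) φ
        exact this
      have h0 : ⟪b i, φ - Sproj T Λ φ⟫ = 0 :=
        (Submodule.mem_orthogonal _ _).mp hsub (b i) hbmem
      rw [b.repr_apply_apply, h0, if_pos hmem]
    · have hle : ESub T Λ ≤ (ℝ ∙ (b i))ᗮ := by
        apply iSup₂_le
        intro ν hν
        intro u hu
        rw [Submodule.mem_orthogonal_singleton_iff_inner_right]
        exact horth ν u i hu (fun h => hmem (h ▸ hν))
      have h0 : ⟪b i, Sproj T Λ φ⟫ = 0 :=
        Submodule.mem_orthogonal_singleton_iff_inner_right.mp (hle hSmem)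
      have hrw : b.repr (φ - Sproj T Λ φ) i = ⟪b i, φ⟫ - ⟪b i, Sproj T Λ φ⟫ := by
        rw [b.repr_apply_apply, inner_sub_right]
      rw [if_neg hmem, hrw, h0, sub_zero, b.repr_apply_apply]
  -- coordinates of φ - μ • Tinv φ
  have r2 : ∀ i, b.repr (φ - μ • Tinv φ) i = (1 - μ / lam i) * b.repr φ i := by
    intro i
    have h1 : ⟪b i, Tinv φ⟫ = (lam i)⁻¹ * ⟪b i, φ⟫ := by
      rw [← hTinvsymm, hTinvb, real_inner_smul_left]
    have hrw : b.repr (φ - μ • Tinv φ) i = ⟪b i, φ⟫ - μ * ⟪b i, Tinv φ⟫ := by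
      rw [b.repr_apply_apply, inner_sub_right, real_inner_smul_right]
    rw [hrw, h1, b.repr_apply_apply]
    ring
  -- norms via coordinates
  have hnormsq : ∀ w : V, ‖w‖ ^ 2 = ∑ i, (b.repr w i) ^ 2 := by
    intro w
    rw [← b.repr.norm_map w, PiLp.norm_sq_eq_of_L2]
    simp [Real.norm_eq_abs, sq_abs]
  -- squared inequality
  have key : ‖φ - Sproj T Λ φ‖ ^ 2 ≤ (Cconst T Λ μ * ‖φ - μ • Tinv φ‖) ^ 2 := by
    rw [mul_pow, hnormsq, hnormsq, Finset.mul_sum]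
    apply Finset.sum_le_sum
    intro i _
    rw [r1 i, r2 i]
    by_cases hmem : lam i ∈ Λ
    · rw [if_pos hmem, zero_pow (two_ne_zero)]
      positivity
    · rw [if_neg hmem]
      have hne : lam i ≠ μ := by
        intro h
        exact hμ (h ▸ ⟨(hTsymm.hasEigenvalue_eigenvalues hn i : _), hmem⟩)
      have hsub : lam i - μ ≠ 0 := sub_ne_zero.mpr hne
      have hl0 : lam i ≠ 0 := (hlampos i).ne'
      have hid : (b.repr φ i) ^ 2 =
          (lam i / |lam i - μ|) ^ 2 * ((1 - μ / lam i) * b.repr φ i) ^ 2 := by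
        rw [div_pow, sq_abs]
        field_simp
      rw [hid]
      apply mul_le_mul_of_nonneg_right _ (sq_nonneg _)
      have h1 : 0 ≤ lam i / |lam i - μ| := div_nonneg (hlampos i).le (abs_nonneg _)
      exact pow_le_pow_left₀ h1 (hCmem i hmem) 2
  have h2 : 0 ≤ Cconst T Λ μ * ‖φ - μ • Tinv φ‖ := mul_nonneg hC0 (norm_nonneg _)
  exact (pow_le_pow_iff_left₀ (norm_nonneg _) h2 (by norm_num)).mp key
end
end

section
/- Let T' = T ∘ (I−S), and let μ̂ > 0 with μ̂ ∉ Spec(T)\Λ. Then the operator μ̂·I − T' is invertible, and for every φ̂ ∈ V, (I−S)φ̂ = −(μ̂·I − T')⁻¹ ∘ T ∘ (I−S) (φ̂ − μ̂ T⁻¹ φ̂). -/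
open scoped RealInnerProductSpace

noncomputable section

variable {V : Type*} [NormedAddCommGroup V] [InnerProductSpace ℝ V]

/-- key identity (2.2): with `T' = T ∘ (I−S)` and `μ̂ ∉ Spec(T)\Λ`,
`μ̂·I − T'` is invertible and for every `φ̂ ∈ V`,
`(I−S)φ̂ = −(μ̂·I − T')⁻¹ ∘ T ∘ (I−S) (φ̂ − μ̂ T⁻¹ φ̂)`. -/
theorem stmt_7 [FiniteDimensional ℝ V]
    (T Tinv : V →ₗ[ℝ] V) (hTsymm : T.IsSymmetric)
    (hTpos : ∀ v : V, v ≠ 0 → 0 < ⟪T v, v⟫)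
    (hTinv₁ : ∀ v, T (Tinv v) = v) (hTinv₂ : ∀ v, Tinv (T v) = v)
    (Λ : Set ℝ) (hΛ : Λ ⊆ specSet T)
    (μ : ℝ) (hμpos : 0 < μ) (hμ : μ ∉ specSet T \ Λ)
    (T' : V →ₗ[ℝ] V) (hT' : T' = T ∘ₗ (LinearMap.id - Sproj T Λ)) :
    Function.Bijective (μ • (LinearMap.id : V →ₗ[ℝ] V) - T') ∧
      ∀ e : V ≃ₗ[ℝ] V, (e : V →ₗ[ℝ] V) = μ • (LinearMap.id : V →ₗ[ℝ] V) - T' →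
        ∀ φ : V, φ - Sproj T Λ φ =
          - e.symm (T ((φ - μ • Tinv φ) - Sproj T Λ (φ - μ • Tinv φ))) := by
  classical
  set E := ESub T Λ with hE
  -- T-invariance of E
  have hTE : ∀ x ∈ E, T x ∈ E := by
    have hle : E ≤ E.comap T := by
      rw [hE, ESub]
      refine iSup₂_le fun ν hν => ?_
      intro y hy
      have hyE : y ∈ E := by
        have : Module.End.eigenspace T ν ≤ E := by
          rw [hE, ESub]
          exact le_iSup₂ (f := fun ν (_ : ν ∈ Λ) => Module.End.eigenspace T ν) ν hν
        exact this hy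
      have hTy : T y = ν • y := Module.End.mem_eigenspace_iff.mp hy
      simp only [Submodule.mem_comap, hTy]
      exact E.smul_mem ν hyE
    intro x hx
    exact hle hx
  -- T-invariance of Eᗮ
  have hTEp : ∀ w ∈ Eᗮ, T w ∈ Eᗮ := by
    intro w hw
    rw [Submodule.mem_orthogonal] at hw ⊢
    intro u hu
    rw [← hTsymm u w]
    exact hw (T u) (hTE u hu)
  -- basic facts about the projection
  have hSmem : ∀ v : V, Sproj T Λ v ∈ E := fun v => (E.orthogonalProjectionOnto v).2
  have hSid : ∀ v ∈ E, Sproj T Λ v = v := fun v hv =>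
    Submodule.starProjection_eq_self_iff.mpr hv
  have hSzero : ∀ v ∈ Eᗮ, Sproj T Λ v = 0 := by
    intro v hv
    have : E.orthogonalProjectionOnto v = 0 :=
      Submodule.orthogonalProjectionOnto_apply_of_mem_orthogonal hv
    simp [Sproj, hE, this, (Submodule.starProjection_apply_eq_zero_iff (K := ESub T Λ)).mpr hv]
  have hsub : ∀ v : V, v - Sproj T Λ v ∈ Eᗮ := fun v =>
    Submodule.sub_starProjection_mem_orthogonal v
  -- S commutes with T
  have hST : ∀ v : V, Sproj T Λ (T v) = T (Sproj T Λ v) := by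
    intro v
    have hdec : T v = T (Sproj T Λ v) + T (v - Sproj T Λ v) := by
      rw [← map_add]; congr 1; abel
    rw [hdec, map_add, hSid _ (hTE _ (hSmem v)), hSzero _ (hTEp _ (hsub v)), add_zero]
  have hSS : ∀ v : V, Sproj T Λ (Sproj T Λ v) = Sproj T Λ v := fun v =>
    hSid _ (hSmem v)
  -- injectivity
  have hinj : Function.Injective (μ • (LinearMap.id : V →ₗ[ℝ] V) - T') := by
    rw [← LinearMap.ker_eq_bot]
    rw [Submodule.eq_bot_iff]
    intro v hv
    rw [LinearMap.mem_ker, LinearMap.sub_apply, LinearMap.smul_apply, LinearMap.id_apply,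
      sub_eq_zero, hT'] at hv
    have hv' : μ • v = T (v - Sproj T Λ v) := by
      simpa using hv
    have hSv : Sproj T Λ v = 0 := by
      have h1 : μ • Sproj T Λ v = Sproj T Λ (T (v - Sproj T Λ v)) := by
        rw [← hv', map_smul]
      rw [hST, hSzero _ (hsub v), map_zero] at h1
      have := smul_eq_zero.mp h1.symm.symm
      rcases smul_eq_zero.mp h1 with h | h
      · exact absurd h (ne_of_gt hμpos)
      · exact h
    by_contra hvne
    have hvne' : v ≠ 0 := hvne
    have hTv : T v = μ • v := by
      rw [hv', hSv, sub_zero]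
    have hev : Module.End.HasEigenvalue T μ :=
      Module.End.hasEigenvalue_of_hasEigenvector
        ⟨Module.End.mem_eigenspace_iff.mpr hTv, hvne'⟩
    have hμΛ : μ ∈ Λ := by
      by_contra hμΛ
      exact hμ ⟨hev, hμΛ⟩
    have hvE : v ∈ E := by
      have : Module.End.eigenspace T μ ≤ E := by
        rw [hE, ESub]
        exact le_iSup₂ (f := fun ν (_ : ν ∈ Λ) => Module.End.eigenspace T ν) μ hμΛ
      exact this (Module.End.mem_eigenspace_iff.mpr hTv)
    have hvEp : v ∈ Eᗮ := by
      have := hsub v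
      rwa [hSv, sub_zero] at this
    have : ⟪v, v⟫ = 0 := (Submodule.mem_orthogonal E v).mp hvEp v hvE
    exact hvne' (inner_self_eq_zero.mp this)
  have hbij : Function.Bijective (μ • (LinearMap.id : V →ₗ[ℝ] V) - T') :=
    ⟨hinj, (LinearMap.injective_iff_surjective).mp hinj⟩
  refine ⟨hbij, ?_⟩
  intro e he φ
  set ψ := φ - μ • Tinv φ with hψ
  have hex : ∀ x, e x = μ • x - T (x - Sproj T Λ x) := by
    intro x
    have h := LinearMap.congr_fun he x
    simpa [hT', LinearMap.sub_apply, LinearMap.smul_apply] using h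
  have hkey : e (φ - Sproj T Λ φ) = - T (ψ - Sproj T Λ ψ) := by
    have h0 : Sproj T Λ (φ - Sproj T Λ φ) = 0 := by
      rw [map_sub, hSS, sub_self]
    have h2 : T (Sproj T Λ (Tinv φ)) = Sproj T Λ φ := by
      rw [← hST, hTinv₁]
    have h1 : ψ - Sproj T Λ ψ = (φ - Sproj T Λ φ) - μ • (Tinv φ - Sproj T Λ (Tinv φ)) := by
      rw [hψ, map_sub, map_smul, smul_sub]
      abel
    simp only [hex, h0, sub_zero, h1, map_sub, map_smul, hTinv₁, h2]
    module
  have h := congrArg e.symm hkey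
  rw [LinearEquiv.symm_apply_apply, map_neg] at h
  rw [h, hψ]
end
end

section
/- Assume Λ is a nonempty subset of Spec(T), let T' = T ∘ (I−S), and let μ̂ > 0 with μ̂ ∉ Spec(T)\Λ. Then μ̂·I − T' is invertible and the operator norm of T' ∘ (μ̂·I − T')⁻¹ (induced by the inner-product norm on V) equals max_{ξ ∈ (Spec(T)\Λ) ∪ {0}} ξ/|ξ−μ̂|. -/
open scoped RealInnerProductSpace

noncomputable section

variable {V : Type*} [NormedAddCommGroup V] [InnerProductSpace ℝ V]

lemma diag_repr {n : ℕ} (b : OrthonormalBasis (Fin n) ℝ V) (A : V →ₗ[ℝ] V)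
    (c : Fin n → ℝ) (hA : ∀ i, A (b i) = c i • b i) (v : V) (j : Fin n) :
    b.repr (A v) j = c j * b.repr v j := by
  classical
  have hAv : A v = ∑ i, (c i * b.repr v i) • b i := by
    conv_lhs => rw [← b.sum_repr v]
    rw [map_sum]
    simp_rw [LinearMap.map_smul, hA, smul_smul, mul_comm]
  rw [b.repr_apply_apply, hAv, inner_sum]
  simp_rw [real_inner_smul_right]
  rw [Finset.sum_eq_single j]
  · rw [real_inner_self_eq_norm_sq, b.orthonormal.1 j]; ring
  · intro i _ hij
    rw [b.orthonormal.2 (Ne.symm hij), mul_zero]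
  · intro h; exact absurd (Finset.mem_univ j) h

lemma diag_inj {n : ℕ} (b : OrthonormalBasis (Fin n) ℝ V) (A : V →ₗ[ℝ] V)
    (c : Fin n → ℝ) (hA : ∀ i, A (b i) = c i • b i) (hc : ∀ i, c i ≠ 0) :
    Function.Injective A := by
  rw [← LinearMap.ker_eq_bot, LinearMap.ker_eq_bot']
  intro v hv
  have h : ∀ j, b.repr v j = 0 := by
    intro j
    have := diag_repr b A c hA v j
    rw [hv] at this
    simp at this
    rcases this with h | h
    · exact absurd h (hc j)
    · exact h
  have : b.repr v = 0 := by ext j; simpa using h j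
  simpa using congrArg b.repr.symm this

lemma diag_norm_le {n : ℕ} (b : OrthonormalBasis (Fin n) ℝ V) (A : V →ₗ[ℝ] V)
    (c : Fin n → ℝ) (hA : ∀ i, A (b i) = c i • b i) (M : ℝ) (hM : 0 ≤ M)
    (hle : ∀ i, |c i| ≤ M) (v : V) : ‖A v‖ ≤ M * ‖v‖ := by
  rw [← b.repr.norm_map (A v), ← b.repr.norm_map v,
    EuclideanSpace.norm_eq, EuclideanSpace.norm_eq]
  rw [← Real.sqrt_sq hM, ← Real.sqrt_mul (sq_nonneg M)]
  apply Real.sqrt_le_sqrt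
  rw [Finset.mul_sum]
  apply Finset.sum_le_sum
  intro i _
  rw [diag_repr b A c hA]
  have h1 : ‖c i * b.repr v i‖ ^ 2 = (c i)^2 * ‖b.repr v i‖^2 := by
    rw [norm_mul, mul_pow]; simp [Real.norm_eq_abs, sq_abs]
  rw [h1]
  apply mul_le_mul_of_nonneg_right _ (sq_nonneg _)
  calc (c i)^2 = |c i|^2 := (sq_abs _).symm
  _ ≤ M^2 := by apply pow_le_pow_left₀ (abs_nonneg _) (hle i)

lemma diag_opNorm {n : ℕ} (b : OrthonormalBasis (Fin n) ℝ V) (A : V →ₗ[ℝ] V)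
    [FiniteDimensional ℝ V]
    (c : Fin n → ℝ) (hA : ∀ i, A (b i) = c i • b i) (i0 : Fin n)
    (hmax : ∀ i, |c i| ≤ |c i0|) :
    ‖A.toContinuousLinearMap‖ = |c i0| := by
  apply le_antisymm
  · apply ContinuousLinearMap.opNorm_le_bound _ (abs_nonneg _)
    intro v
    exact diag_norm_le b A c hA _ (abs_nonneg _) hmax v
  · have h := A.toContinuousLinearMap.le_opNorm (b i0)
    have hb : ‖b i0‖ = 1 := b.orthonormal.1 i0
    rw [hb, mul_one] at h
    have hAv : ‖A.toContinuousLinearMap (b i0)‖ = |c i0| := by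
      simp [hA i0, norm_smul, hb, Real.norm_eq_abs]
    rwa [hAv] at h

/-- constant formula (2.4): for nonempty `Λ ⊆ Spec(T)`,
`T' = T ∘ (I−S)` and `μ̂ > 0` with `μ̂ ∉ Spec(T)\Λ`, the operator `μ̂·I − T'` is
invertible and `‖T' ∘ (μ̂·I − T')⁻¹‖ = max_{ξ ∈ (Spec(T)\Λ) ∪ {0}} ξ/|ξ−μ̂|`. -/
theorem stmt_9 [FiniteDimensional ℝ V]
    (T : V →ₗ[ℝ] V) (hTsymm : T.IsSymmetric)
    (hTpos : ∀ v : V, v ≠ 0 → 0 < ⟪T v, v⟫)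
    (Λ : Set ℝ) (hΛ : Λ ⊆ specSet T) (hΛne : Λ.Nonempty)
    (T' : V →ₗ[ℝ] V) (hT' : T' = T ∘ₗ (LinearMap.id - Sproj T Λ))
    (μ : ℝ) (hμpos : 0 < μ) (hμ : μ ∉ specSet T \ Λ) :
    Function.Bijective (μ • (LinearMap.id : V →ₗ[ℝ] V) - T') ∧
      ∀ e : V ≃ₗ[ℝ] V, (e : V →ₗ[ℝ] V) = μ • (LinearMap.id : V →ₗ[ℝ] V) - T' →
        ‖LinearMap.toContinuousLinearMap (T' ∘ₗ (e.symm : V →ₗ[ℝ] V))‖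
          = sSup ((fun ξ => ξ / |ξ - μ|) '' ((specSet T \ Λ) ∪ {0})) := by
  classical
  obtain ⟨lam0, hlam0⟩ := hΛne
  have hlam0spec : Module.End.HasEigenvalue T lam0 := hΛ hlam0
  obtain ⟨v0, hv0⟩ := hlam0spec.exists_hasEigenvector
  have hVnt : Nontrivial V := nontrivial_of_ne v0 0 hv0.2
  have hdim : Module.finrank ℝ V = Module.finrank ℝ V := rfl
  set n := Module.finrank ℝ V with hnn
  set b := hTsymm.eigenvectorBasis hdim with hb
  set α := hTsymm.eigenvalues hdim with hα
  have hTb : ∀ i, T (b i) = α i • b i := fun i => by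
    exact_mod_cast hTsymm.apply_eigenvectorBasis hdim i
  have hαpos : ∀ i, 0 < α i := by
    intro i
    have hbne : (b i) ≠ 0 := b.toBasis.ne_zero i
    have := hTpos (b i) hbne
    rw [hTb i, real_inner_smul_left, real_inner_self_eq_norm_sq, b.orthonormal.1 i] at this
    simpa using this
  -- Spec T = range α
  have hspec : specSet T = Set.range α := by
    ext ξ
    constructor
    · intro hξ
      by_contra hξr
      obtain ⟨v, hv⟩ := Module.End.HasEigenvalue.exists_hasEigenvector hξ
      have hvT : T v = ξ • v := Module.End.mem_eigenspace_iff.mp hv.1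
      have hco : ∀ i, ⟪b i, v⟫ = 0 := by
        intro i
        have h1 : ⟪T (b i), v⟫ = ⟪b i, T v⟫ := hTsymm (b i) v
        rw [hTb i, hvT, real_inner_smul_left, real_inner_smul_right] at h1
        have h2 : (α i - ξ) * ⟪b i, v⟫ = 0 := by linarith
        rcases mul_eq_zero.mp h2 with h | h
        · exact absurd (sub_eq_zero.mp h).symm (fun he => hξr ⟨i, he.symm⟩)
        · exact h
      have : v = 0 := by
        have : b.repr v = 0 := by
          ext i
          simpa [b.repr_apply_apply] using hco i
        simpa using congrArg b.repr.symm this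
      exact hv.2 this
    · rintro ⟨i, rfl⟩
      exact hTsymm.hasEigenvalue_eigenvalues hdim i
  -- projection on basis vectors
  have hbmem : ∀ i, b i ∈ Module.End.eigenspace T (α i) := by
    intro i
    exact Module.End.mem_eigenspace_iff.mpr (hTb i)
  have hSb : ∀ i, Sproj T Λ (b i) = if α i ∈ Λ then b i else 0 := by
    intro i
    by_cases hi : α i ∈ Λ
    · rw [if_pos hi]
      have hmem : b i ∈ ESub T Λ := by
        have h1 : Module.End.eigenspace T (α i) ≤ ESub T Λ := by
          apply le_iSup₂ (f := fun μ _ => Module.End.eigenspace T μ) (α i) hi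
        exact h1 (hbmem i)
      simp only [Sproj]; exact Submodule.starProjection_eq_self_iff.mpr hmem
    · rw [if_neg hi]
      have hortho : b i ∈ (ESub T Λ)ᗮ := by
        have hle : ESub T Λ ≤ (ℝ ∙ (b i))ᗮ := by
          apply iSup₂_le
          intro ξ hξ
          intro u hu
          rw [Submodule.mem_orthogonal_singleton_iff_inner_right]
          have hne : α i ≠ ξ := fun he => hi (he ▸ hξ)
          exact hTsymm.orthogonalFamily_eigenspaces hne ⟨b i, hbmem i⟩ ⟨u, hu⟩
        rw [Submodule.mem_orthogonal]
        intro u hu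
        have := hle hu
        rw [Submodule.mem_orthogonal_singleton_iff_inner_right] at this
        rwa [real_inner_comm]
      simp [Sproj,
        Submodule.orthogonalProjectionOnto_apply_of_mem_orthogonal hortho]
  set ν : Fin n → ℝ := fun i => if α i ∈ Λ then 0 else α i with hν
  have hT'b : ∀ i, T' (b i) = ν i • b i := by
    intro i
    rw [hT']
    simp only [LinearMap.comp_apply, LinearMap.sub_apply, LinearMap.id_apply, hSb i, hν]
    by_cases hi : α i ∈ Λ
    · simp [hi]
    · simp [hi, hTb i]
  have hνnonneg : ∀ i, 0 ≤ ν i := by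
    intro i
    rw [hν]
    by_cases hi : α i ∈ Λ
    · simp [hi]
    · simp [hi]; exact (hαpos i).le
  have hμν : ∀ i, μ - ν i ≠ 0 := by
    intro i
    rw [hν]
    by_cases hi : α i ∈ Λ
    · simp [hi]; exact hμpos.ne'
    · simp [hi]
      intro he
      have hμα : μ = α i := sub_eq_zero.mp he
      refine hμ ⟨?_, ?_⟩
      · rw [hspec, hμα]; exact Set.mem_range_self i
      · rw [hμα]; exact hi
  set B : V →ₗ[ℝ] V := μ • (LinearMap.id : V →ₗ[ℝ] V) - T' with hB
  have hBb : ∀ i, B (b i) = (μ - ν i) • b i := by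
    intro i
    simp [hB, hT'b i, sub_smul]
  have hBinj : Function.Injective B := diag_inj b B _ hBb hμν
  have hBbij : Function.Bijective B :=
    ⟨hBinj, (LinearMap.injective_iff_surjective (f := B)).mp hBinj⟩
  -- second part
  have hpart2 : ∀ e : V ≃ₗ[ℝ] V, (e : V →ₗ[ℝ] V) = μ • (LinearMap.id : V →ₗ[ℝ] V) - T' →
      ‖LinearMap.toContinuousLinearMap (T' ∘ₗ (e.symm : V →ₗ[ℝ] V))‖
        = sSup ((fun ξ => ξ / |ξ - μ|) '' ((specSet T \ Λ) ∪ {0})) := by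
    intro e he
    have heapp : ∀ v, e v = B v := by
      intro v
      rw [← hB] at he
      exact DFunLike.congr_fun (congrArg (fun f : V →ₗ[ℝ] V => f) he) v
    set γ : Fin n → ℝ := fun i => ν i * (μ - ν i)⁻¹ with hγ
    have hesymm : ∀ i, e.symm (b i) = (μ - ν i)⁻¹ • b i := by
      intro i
      apply e.injective
      rw [e.apply_symm_apply, heapp, map_smul, hBb i, smul_smul,
        inv_mul_cancel₀ (hμν i), one_smul]
    set A : V →ₗ[ℝ] V := T' ∘ₗ (e.symm : V →ₗ[ℝ] V) with hA
    have hAb : ∀ i, A (b i) = γ i • b i := by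
      intro i
      simp only [hA, LinearMap.comp_apply, LinearEquiv.coe_coe, hesymm i, map_smul,
        hT'b i, smul_smul, hγ]
      rw [mul_comm]
    obtain ⟨i0, -, hi0⟩ := Finset.exists_max_image Finset.univ (fun i => |γ i|)
      ⟨⟨0, by rw [hnn]; exact Module.finrank_pos⟩, Finset.mem_univ _⟩
    have hmax : ∀ i, |γ i| ≤ |γ i0| := fun i => hi0 i (Finset.mem_univ i)
    rw [diag_opNorm b A γ hAb i0 hmax]
    -- now the sSup computation
    have habs : ∀ i, ν i / |ν i - μ| = |γ i| := by
      intro i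
      rw [hγ, abs_mul, abs_inv, abs_of_nonneg (hνnonneg i), abs_sub_comm μ (ν i),
        div_eq_mul_inv]
    have hΞ : (specSet T \ Λ) ∪ {0} = Set.range ν := by
      ext ξ
      constructor
      · rintro (⟨hs, hnl⟩ | h0)
        · rw [hspec] at hs
          obtain ⟨i, rfl⟩ := hs
          exact ⟨i, by rw [hν]; simp [hnl]⟩
        · obtain ⟨i, hi⟩ : lam0 ∈ Set.range α := hspec ▸ hΛ hlam0
          refine ⟨i, ?_⟩
          simp only [Set.mem_singleton_iff] at h0
          simp only [hν, hi, hlam0, if_true, h0]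
      · rintro ⟨i, rfl⟩
        rw [hν]
        by_cases hi : α i ∈ Λ
        · simp [hi]
        · left
          simp only [hi, if_neg, ite_false]
          exact ⟨hspec ▸ Set.mem_range_self i, hi⟩
    rw [hΞ, ← Set.range_comp]
    have hfun : ((fun ξ => ξ / |ξ - μ|) ∘ ν) = fun i => |γ i| := by
      funext i
      exact habs i
    rw [hfun]
    symm
    apply IsGreatest.csSup_eq
    exact ⟨⟨i0, rfl⟩, by rintro x ⟨i, rfl⟩; exact hmax i⟩
  exact ⟨hBbij, hpart2⟩
end
end

section
/- Let φ₁,…,φᵣ ∈ V be orthonormal eigenvectors of T with Tφⱼ = μⱼφⱼ, let S be the orthogonal projection onto span{φ₁,…,φᵣ}, and let φ̂₁,…,φ̂ᵣ ∈ V satisfy ⟨φ̂ᵢ, φ̂ⱼ⟩ = δ_{ij} and ⟨Tφ̂ᵢ, φ̂ⱼ⟩ = μ̂ᵢ δ_{ij}. Then Σ_{i=1}^r ⟨T(I−S)φ̂ᵢ, (I−S)φ̂ᵢ⟩ ≥ Σ_{i=1}^r μ̂ᵢ − Σ_{j=1}^r μⱼ. -/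
open scoped RealInnerProductSpace

noncomputable section

/-- key inequality in the proof of (2.9): for orthonormal
eigenvectors `φ₁,…,φᵣ` of `T` with `Tφⱼ = μⱼφⱼ`, `S` the orthogonal projection onto
their span, and `φ̂₁,…,φ̂ᵣ` with `⟨φ̂ᵢ, φ̂ⱼ⟩ = δ_{ij}` and `⟨Tφ̂ᵢ, φ̂ⱼ⟩ = μ̂ᵢ δ_{ij}`,
`Σᵢ ⟨T(I−S)φ̂ᵢ, (I−S)φ̂ᵢ⟩ ≥ Σᵢ μ̂ᵢ − Σⱼ μⱼ`. -/
theorem stmt_13 {V : Type*} [NormedAddCommGroup V] [InnerProductSpace ℝ V]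
    [FiniteDimensional ℝ V]
    (T : V →ₗ[ℝ] V) (hTsymm : T.IsSymmetric)
    (hTpos : ∀ v : V, v ≠ 0 → 0 < ⟪T v, v⟫)
    (r : ℕ) (φt : Fin r → V) (μt : Fin r → ℝ)
    (hON : Orthonormal ℝ φt)
    (heig : ∀ j, T (φt j) = μt j • φt j)
    (S : V →ₗ[ℝ] V)
    (hS : S = (Submodule.span ℝ (Set.range φt)).subtype ∘ₗ
      (Submodule.orthogonalProjectionOnto (Submodule.span ℝ (Set.range φt))).toLinearMap)
    (φ : Fin r → V) (μ : Fin r → ℝ)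
    (hφON : ∀ i j, ⟪φ i, φ j⟫ = if i = j then (1 : ℝ) else 0)
    (hφB : ∀ i j, ⟪T (φ i), φ j⟫ = if i = j then μ i else 0) :
    ∑ i : Fin r, μ i - ∑ j : Fin r, μt j
      ≤ ∑ i : Fin r, ⟪T (φ i - S (φ i)), φ i - S (φ i)⟫ := by
  classical
  set K := Submodule.span ℝ (Set.range φt) with hK
  -- projection formula
  have hSx : ∀ x : V, S x = ∑ j, ⟪φt j, x⟫ • φt j := by
    intro x
    rw [hS]
    show ((Submodule.orthogonalProjectionOnto K x : V)) = _
    rw [← Submodule.starProjection_apply]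
    apply Submodule.eq_starProjection_of_mem_of_inner_eq_zero
    · exact Submodule.sum_mem _ fun j _ =>
        Submodule.smul_mem _ _ (Submodule.subset_span ⟨j, rfl⟩)
    · intro w hw
      induction hw using Submodule.span_induction with
      | mem w hw =>
        obtain ⟨k, rfl⟩ := hw
        rw [inner_sub_left, sum_inner]
        have : ∑ j, ⟪⟪φt j, x⟫ • φt j, φt k⟫ = ⟪x, φt k⟫ := by
          rw [Finset.sum_eq_single k]
          · rw [real_inner_smul_left, real_inner_self_eq_norm_sq, hON.1 k]
            simp [real_inner_comm]
          · intro j _ hjk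
            rw [real_inner_smul_left, hON.2 hjk, mul_zero]
          · simp
        rw [this, sub_self]
      | zero => simp
      | add u v _ _ hu hv => rw [inner_add_right, hu, hv, add_zero]
      | smul a u _ hu => rw [inner_smul_right, hu, mul_zero]
  -- coefficients
  set c : Fin r → Fin r → ℝ := fun i j => ⟪φt j, φ i⟫ with hc
  have hTS : ∀ i, T (S (φ i)) = ∑ j, (c i j * μt j) • φt j := by
    intro i
    rw [hSx, map_sum]
    refine Finset.sum_congr rfl fun j _ => ?_
    rw [map_smul, heig, smul_smul]
  -- each term equals μ i - ∑ j, μt j * (c i j)^2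
  have hterm : ∀ i, ⟪T (φ i - S (φ i)), φ i - S (φ i)⟫
      = μ i - ∑ j, μt j * (c i j) ^ 2 := by
    intro i
    have h1 : ⟪T (φ i), φ i⟫ = μ i := by simpa using hφB i i
    have h2 : ⟪T (S (φ i)), φ i⟫ = ∑ j, μt j * (c i j) ^ 2 := by
      rw [hTS, sum_inner]
      refine Finset.sum_congr rfl fun j _ => ?_
      rw [real_inner_smul_left]
      have : ⟪φt j, φ i⟫ = c i j := rfl
      rw [this]; ring
    have h3 : ⟪T (φ i), S (φ i)⟫ = ∑ j, μt j * (c i j) ^ 2 := by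
      rw [hTsymm, real_inner_comm, h2]
    have h4 : ⟪T (S (φ i)), S (φ i)⟫ = ∑ j, μt j * (c i j) ^ 2 := by
      rw [hTS, hSx, sum_inner]
      refine Finset.sum_congr rfl fun j _ => ?_
      rw [real_inner_smul_left, inner_sum, Finset.sum_eq_single j]
      · rw [real_inner_smul_right, real_inner_self_eq_norm_sq, hON.1 j]
        ring
      · intro k _ hkj
        rw [real_inner_smul_right, hON.2 hkj.symm, mul_zero]
      · simp
    rw [map_sub, inner_sub_left, inner_sub_right, inner_sub_right, h1, h2, h3, h4]
    ring
  rw [Finset.sum_congr rfl fun i _ => hterm i, Finset.sum_sub_distrib]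
  have hswap : ∑ i : Fin r, ∑ j, μt j * (c i j) ^ 2
      = ∑ j : Fin r, μt j * ∑ i, (c i j) ^ 2 := by
    rw [Finset.sum_comm]
    exact Finset.sum_congr rfl fun j _ => by rw [Finset.mul_sum]
  rw [hswap]
  gcongr with j hj
  -- ∑ j, μt j * ∑ i (c i j)^2 ≤ ∑ j, μt j
  have hμtpos : 0 < μt j := by
    have hne : φt j ≠ 0 := by
      intro h
      have := hON.1 j
      rw [h, norm_zero] at this
      exact one_ne_zero this.symm
    have := hTpos (φt j) hne
    rwa [heig, real_inner_smul_left, real_inner_self_eq_norm_sq, hON.1 j,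
      one_pow, mul_one] at this
  have hφbON : Orthonormal ℝ φ := orthonormal_iff_ite.mpr hφON
  have hbessel : ∑ i, (c i j) ^ 2 ≤ 1 := by
    have := hφbON.sum_inner_products_le (φt j) (s := Finset.univ)
    rw [show ‖φt j‖ ^ 2 = 1 by rw [hON.1 j]; norm_num] at this
    refine le_trans (le_of_eq ?_) this
    refine Finset.sum_congr rfl fun i _ => ?_
    rw [hc]
    simp only [Real.norm_eq_abs, sq_abs, real_inner_comm]
  calc μt j * ∑ i, (c i j) ^ 2 ≤ μt j * 1 := by
        exact mul_le_mul_of_nonneg_left hbessel hμtpos.le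
    _ = μt j := mul_one _
end
end

section
/- Let E and Ê be r-dimensional subspaces of a finite-dimensional real inner product space V, let S be the orthogonal projection onto E, let φ̂₁,…,φ̂ᵣ be a basis of Ê, and define the Gram matrices G_{ij} = ⟨φ̂ⱼ, φ̂ᵢ⟩ and H_{ij} = ⟨(I−S)φ̂ⱼ, (I−S)φ̂ᵢ⟩. If λ_max(G⁻¹H) < 1, then gap(E,Ê) := max{ sup_{v̂∈Ê, v̂≠0} inf_{v∈E} ‖v−v̂‖/‖v̂‖ , sup_{v∈E, v≠0} inf_{v̂∈Ê} ‖v−v̂‖/‖v‖ } = √(λ_max(G⁻¹H)). -/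
open scoped RealInnerProductSpace
open Matrix

noncomputable section

/-- The directional gap `δ(A,B) = sup_{w∈A, w≠0} inf_{v∈B} ‖v−w‖/‖w‖`. -/
def dirGap {V : Type*} [NormedAddCommGroup V] [InnerProductSpace ℝ V]
    (A B : Submodule ℝ V) : ℝ :=
  sSup ((fun w => sInf ((fun v => ‖v - w‖ / ‖w‖) '' (B : Set V)))
    '' {w : V | w ∈ A ∧ w ≠ 0})

section aux
variable {V : Type*} [NormedAddCommGroup V] [InnerProductSpace ℝ V] [FiniteDimensional ℝ V]

lemma sInf_ratio (E : Submodule ℝ V) (w : V) (hw : w ≠ 0) :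
    sInf ((fun v => ‖v - w‖ / ‖w‖) '' (E : Set V)) =
      ‖w - (E.orthogonalProjectionOnto w : V)‖ / ‖w‖ := by
  have hwpos : (0:ℝ) < ‖w‖ := norm_pos_iff.mpr hw
  apply le_antisymm
  · apply csInf_le
    · refine ⟨0, ?_⟩
      rintro y ⟨v, hv, rfl⟩; positivity
    · exact ⟨(E.orthogonalProjectionOnto w : V), Submodule.coe_mem _, by rw [norm_sub_rev]⟩
  · refine le_csInf ⟨_, ⟨(E.orthogonalProjectionOnto w : V), Submodule.coe_mem _, rfl⟩⟩ ?_
    rintro b ⟨v, hv, rfl⟩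
    set p : V := (E.orthogonalProjectionOnto w : V) with hp
    have horth : ⟪v - p, p - w⟫ = 0 := by
      have h0 : ⟪w - p, v - p⟫ = 0 :=
        Submodule.starProjection_inner_eq_zero (K := E) w (v - p) (Submodule.sub_mem _ hv (Submodule.coe_mem _))
      have : ⟪v - p, p - w⟫ = -⟪w - p, v - p⟫ := by
        rw [real_inner_comm]; rw [show p - w = -(w - p) by abel, inner_neg_left]
      rw [this, h0, neg_zero]
    have hpy : ‖v - w‖^2 = ‖v - p‖^2 + ‖p - w‖^2 := by
      have h3 : v - w = (v - p) + (p - w) := by abel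
      rw [h3, norm_add_sq_real, horth]; ring
    have h2 : ‖w - p‖ ≤ ‖v - w‖ := by
      rw [norm_sub_rev]
      nlinarith [norm_nonneg (v - p), norm_nonneg (v - w), norm_nonneg (p - w)]
    show ‖w - p‖ / ‖w‖ ≤ ‖v - w‖ / ‖w‖
    gcongr

end aux

set_option maxHeartbeats 1000000 in
/-- equation (4.2): for `r`-dimensional subspaces `E, Ê`, `S` the
orthogonal projection onto `E`, a basis `φ̂₁,…,φ̂ᵣ` of `Ê`, Gram matrices
`G_{ij} = ⟨φ̂ⱼ, φ̂ᵢ⟩` and `H_{ij} = ⟨(I−S)φ̂ⱼ, (I−S)φ̂ᵢ⟩`, and `λ_max(G⁻¹H)` the largest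
eigenvalue of the pencil `Hx = κGx`, if `λ_max(G⁻¹H) < 1` then
`gap(E,Ê) = √(λ_max(G⁻¹H))`. -/
theorem stmt_19 {V : Type*} [NormedAddCommGroup V] [InnerProductSpace ℝ V]
    [FiniteDimensional ℝ V]
    (r : ℕ) (E Ehat : Submodule ℝ V)
    (hdimE : Module.finrank ℝ E = r) (hdimEhat : Module.finrank ℝ Ehat = r)
    (S : V →ₗ[ℝ] V)
    (hS : S = E.subtype ∘ₗ E.orthogonalProjectionOnto.toLinearMap)
    (φ : Fin r → V) (hφli : LinearIndependent ℝ φ)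
    (hφspan : Submodule.span ℝ (Set.range φ) = Ehat)
    (G H : Matrix (Fin r) (Fin r) ℝ)
    (hG : ∀ i j, G i j = ⟪φ j, φ i⟫)
    (hH : ∀ i j, H i j = ⟪φ j - S (φ j), φ i - S (φ i)⟫)
    (lamMax : ℝ)
    (hlam : IsGreatest {κ : ℝ | ∃ x : Fin r → ℝ, x ≠ 0 ∧ H.mulVec x = κ • G.mulVec x}
      lamMax)
    (hlt : lamMax < 1) :
    max (dirGap Ehat E) (dirGap E Ehat) = Real.sqrt lamMax := by
  classical
  -- r is positive
  have hr : 0 < r := by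
    by_contra h
    push_neg at h
    obtain ⟨x, hx0, -⟩ := hlam.1
    have : r = 0 := Nat.le_zero.mp h
    subst this
    exact hx0 (Subsingleton.elim x 0)
  haveI : Nontrivial Ehat := Module.nontrivial_of_finrank_pos (R := ℝ) (hdimEhat ▸ hr)
  haveI : Nontrivial E := Module.nontrivial_of_finrank_pos (R := ℝ) (hdimE ▸ hr)
  -- basic facts about S
  have hSval : ∀ w : V, S w = (E.orthogonalProjectionOnto w : V) := by
    intro w; rw [hS]; rfl
  have hSmem : ∀ w : V, S w ∈ E := fun w => by rw [hSval]; exact Submodule.coe_mem _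
  have hSorth : ∀ (w e : V), e ∈ E → ⟪w - S w, e⟫ = 0 := by
    intro w e he; rw [hSval]; exact Submodule.starProjection_inner_eq_zero (K := E) w e he
  -- the operator L = (I - S)|_Ehat and A = L† L
  set L : Ehat →ₗ[ℝ] V := (LinearMap.id - S) ∘ₗ Ehat.subtype with hLdef
  have hLval : ∀ v : Ehat, L v = (v : V) - S (v : V) := fun v => rfl
  set A : Ehat →ₗ[ℝ] Ehat := (LinearMap.adjoint L) ∘ₗ L with hAdef
  have hA_inner : ∀ x y : Ehat, ⟪A x, y⟫ = ⟪L x, L y⟫ := by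
    intro x y
    show ⟪LinearMap.adjoint L (L x), y⟫ = ⟪L x, L y⟫
    exact LinearMap.adjoint_inner_left L y (L x)
  have hAsym : A.IsSymmetric := by
    intro x y
    calc ⟪A x, y⟫ = ⟪L x, L y⟫ := hA_inner x y
      _ = ⟪L y, L x⟫ := real_inner_comm _ _
      _ = ⟪A y, x⟫ := (hA_inner y x).symm
      _ = ⟪x, A y⟫ := real_inner_comm _ _
  -- the basis family in Ehat
  set ψ : Fin r → Ehat := fun i =>
    ⟨φ i, hφspan ▸ Submodule.subset_span (Set.mem_range_self i)⟩ with hψdef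
  have hψcoe : ∀ i, (ψ i : V) = φ i := fun i => rfl
  have hψspan : ∀ w : Ehat, ∃ c : Fin r → ℝ, ∑ i, c i • ψ i = w := by
    intro w
    have hw : (w : V) ∈ Submodule.span ℝ (Set.range φ) := by rw [hφspan]; exact w.2
    obtain ⟨c, hc⟩ := (Submodule.mem_span_range_iff_exists_fun ℝ).mp hw
    refine ⟨c, ?_⟩
    apply Subtype.ext
    push_cast
    simpa using hc
  have hψli : LinearIndependent ℝ ψ := LinearIndependent.of_comp Ehat.subtype hφli
  -- Gram matrix identities
  have hGx : ∀ (x : Fin r → ℝ) (i : Fin r),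
      G.mulVec x i = ⟪(∑ j, x j • ψ j : Ehat), ψ i⟫ := by
    intro x i
    rw [Submodule.coe_inner]
    push_cast
    rw [sum_inner]
    simp only [Matrix.mulVec, dotProduct]
    refine Finset.sum_congr rfl fun j _ => ?_
    rw [hG, real_inner_smul_left, mul_comm]
  have hLψ : ∀ i, L (ψ i) = φ i - S (φ i) := fun i => rfl
  have hHx : ∀ (x : Fin r → ℝ) (i : Fin r),
      H.mulVec x i = ⟪A (∑ j, x j • ψ j), ψ i⟫ := by
    intro x i
    rw [hA_inner, map_sum]
    simp only [_root_.map_smul]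
    rw [sum_inner]
    simp only [Matrix.mulVec, dotProduct]
    refine Finset.sum_congr rfl fun j _ => ?_
    rw [hH, real_inner_smul_left, hLψ, hLψ, mul_comm]
  -- pencil eigenvalues = eigenvalues of A
  have pencil_iff : ∀ κ : ℝ,
      (∃ x : Fin r → ℝ, x ≠ 0 ∧ H.mulVec x = κ • G.mulVec x) ↔
      (∃ v : Ehat, v ≠ 0 ∧ A v = κ • v) := by
    intro κ
    constructor
    · rintro ⟨x, hx0, hx⟩
      set v : Ehat := ∑ j, x j • ψ j with hvdef
      have hv0 : v ≠ 0 := by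
        intro h
        exact hx0 (funext fun i => Fintype.linearIndependent_iff.mp hψli x h i)
      refine ⟨v, hv0, ?_⟩
      have horth : ∀ i, ⟪A v - κ • v, ψ i⟫ = 0 := by
        intro i
        rw [inner_sub_left, real_inner_smul_left]
        have h1 : ⟪A v, ψ i⟫ = H.mulVec x i := (hHx x i).symm
        have h2 : ⟪v, ψ i⟫ = G.mulVec x i := (hGx x i).symm
        rw [h1, h2, hx]
        simp [Pi.smul_apply, smul_eq_mul]
      obtain ⟨c, hc⟩ := hψspan (A v - κ • v)
      have : ⟪A v - κ • v, A v - κ • v⟫ = 0 := by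
        nth_rewrite 2 [← hc]
        rw [inner_sum]
        refine Finset.sum_eq_zero fun i _ => ?_
        rw [real_inner_smul_right, horth, mul_zero]
      have := inner_self_eq_zero.mp this
      rwa [sub_eq_zero] at this
    · rintro ⟨v, hv0, hv⟩
      obtain ⟨c, hc⟩ := hψspan v
      have hc0 : c ≠ 0 := by
        intro h
        apply hv0
        rw [← hc, h]
        simp
      refine ⟨c, hc0, ?_⟩
      funext i
      have h1 : H.mulVec c i = ⟪A v, ψ i⟫ := by rw [hHx, hc]
      have h2 : G.mulVec c i = ⟪v, ψ i⟫ := by rw [hGx, hc]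
      rw [h1, hv, real_inner_smul_left, Pi.smul_apply, h2, smul_eq_mul]
  have hlam' : IsGreatest {κ : ℝ | ∃ v : Ehat, v ≠ 0 ∧ A v = κ • v} lamMax := by
    constructor
    · exact (pencil_iff lamMax).mp hlam.1
    · intro κ hκ
      exact hlam.2 ((pencil_iff κ).mpr hκ)
  -- nonnegativity of lamMax
  obtain ⟨v₀, hv₀0, hv₀⟩ := hlam'.1
  have hnormv₀ : (0:ℝ) < ‖v₀‖^2 := pow_pos (norm_pos_iff.mpr hv₀0) 2
  have hray : ∀ (v : Ehat) (κ : ℝ), A v = κ • v → ‖L v‖^2 = κ * ‖v‖^2 := by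
    intro v κ h
    have : ⟪A v, v⟫ = ‖L v‖^2 := by
      rw [hA_inner, real_inner_self_eq_norm_sq]
    rw [← this, h, real_inner_smul_left, real_inner_self_eq_norm_sq]
  have hlam0 : 0 ≤ lamMax := by
    have := hray v₀ lamMax hv₀
    nlinarith [sq_nonneg ‖L v₀‖]
  -- the key Rayleigh bound : ‖L v‖² ≤ lamMax ‖v‖²
  have KEY : ∀ v : Ehat, ‖L v‖^2 ≤ lamMax * ‖v‖^2 := by
    set f : {x : Ehat // x ≠ 0} → ℝ :=
      fun x => ⟪A (x : Ehat), (x : Ehat)⟫ / ‖(x : Ehat)‖^2 with hfdef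
    have hbdd : BddAbove (Set.range f) := by
      refine ⟨‖LinearMap.toContinuousLinearMap A‖, ?_⟩
      rintro y ⟨x, rfl⟩
      have hx2 : (0:ℝ) < ‖(x : Ehat)‖^2 := pow_pos (norm_pos_iff.mpr x.2) 2
      show ⟪A (x : Ehat), (x : Ehat)⟫ / ‖(x : Ehat)‖^2 ≤ ‖LinearMap.toContinuousLinearMap A‖
      rw [div_le_iff₀ hx2]
      have h1 : ⟪A (x : Ehat), (x : Ehat)⟫ ≤ ‖A (x : Ehat)‖ * ‖(x : Ehat)‖ :=
        real_inner_le_norm _ _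
      have h2 : ‖A (x : Ehat)‖ ≤ ‖LinearMap.toContinuousLinearMap A‖ * ‖(x : Ehat)‖ :=
        (LinearMap.toContinuousLinearMap A).le_opNorm _
      nlinarith [norm_nonneg (x : Ehat), norm_nonneg (LinearMap.toContinuousLinearMap A)]
    set μ : ℝ := ⨆ x : {x : Ehat // x ≠ 0}, f x with hμdef
    have hEig : Module.End.HasEigenvalue A μ := by
      have h := hAsym.hasEigenvalue_iSup_of_finiteDimensional
      exact h
    obtain ⟨w, hw⟩ := hEig.exists_hasEigenvector
    have hAw : A w = μ • w := Module.End.mem_eigenspace_iff.mp hw.1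
    have hμle : μ ≤ lamMax := hlam'.2 ⟨w, hw.2, hAw⟩
    intro v
    rcases eq_or_ne v 0 with rfl | hv0
    · simp
    · have hv2 : (0:ℝ) < ‖v‖^2 := pow_pos (norm_pos_iff.mpr hv0) 2
      have hle : ⟪A v, v⟫ / ‖v‖^2 ≤ μ := le_ciSup hbdd (⟨v, hv0⟩ : {x : Ehat // x ≠ 0})
      have hAvv : ⟪A v, v⟫ = ‖L v‖^2 := by
        rw [hA_inner, real_inner_self_eq_norm_sq]
      rw [div_le_iff₀ hv2] at hle
      nlinarith
  -- sqrt versions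
  set s : ℝ := Real.sqrt lamMax with hsdef
  have hs0 : 0 ≤ s := Real.sqrt_nonneg _
  have hKEYs : ∀ v : Ehat, ‖L v‖ ≤ s * ‖v‖ := by
    intro v
    have h1 : ‖L v‖ = Real.sqrt (‖L v‖^2) := (Real.sqrt_sq (norm_nonneg _)).symm
    have h2 : s * ‖v‖ = Real.sqrt (lamMax * ‖v‖^2) := by
      rw [Real.sqrt_mul hlam0, Real.sqrt_sq (norm_nonneg _)]
    rw [h1, h2]
    exact Real.sqrt_le_sqrt (KEY v)
  have hattain : ‖L v₀‖ = s * ‖v₀‖ := by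
    have h1 := hray v₀ lamMax hv₀
    have h2 : ‖L v₀‖ = Real.sqrt (lamMax * ‖v₀‖^2) := by
      rw [← h1, Real.sqrt_sq (norm_nonneg _)]
    rw [h2, Real.sqrt_mul hlam0, Real.sqrt_sq (norm_nonneg _)]
  -- rewrite dirGap _ E
  have hdir : ∀ A' : Submodule ℝ V, dirGap A' E =
      sSup ((fun w => ‖w - S w‖ / ‖w‖) '' {w : V | w ∈ A' ∧ w ≠ 0}) := by
    intro A'
    unfold dirGap
    congr 1
    apply Set.image_congr
    rintro w ⟨hw, hw0⟩
    rw [sInf_ratio E w hw0, hSval]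
  -- dirGap Ehat E = s
  have gap1 : dirGap Ehat E = s := by
    rw [hdir]
    have hub : ∀ y ∈ (fun w => ‖w - S w‖ / ‖w‖) '' {w : V | w ∈ Ehat ∧ w ≠ 0}, y ≤ s := by
      rintro y ⟨w, ⟨hw, hw0⟩, rfl⟩
      have hwpos : (0:ℝ) < ‖w‖ := norm_pos_iff.mpr hw0
      have := hKEYs ⟨w, hw⟩
      rw [hLval] at this
      simp only [Submodule.coe_norm] at this
      rw [div_le_iff₀ hwpos]
      exact this
    have hmem : s ∈ (fun w => ‖w - S w‖ / ‖w‖) '' {w : V | w ∈ Ehat ∧ w ≠ 0} := by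
      refine ⟨(v₀ : V), ⟨Submodule.coe_mem _, ?_⟩, ?_⟩
      · simpa using hv₀0
      · have hnpos : (0:ℝ) < ‖(v₀ : V)‖ := by
          simp only [norm_pos_iff]
          simpa using hv₀0
        have := hattain
        rw [hLval] at this
        simp only [Submodule.coe_norm] at this
        field_simp [this]
        rw [this, mul_comm]
    exact le_antisymm (csSup_le ⟨s, hmem⟩ hub) (le_csSup ⟨s, hub⟩ hmem)
  -- s < 1
  have hs1 : s < 1 := by
    nlinarith [Real.sq_sqrt hlam0, Real.sqrt_nonneg lamMax]
  -- the projection restricted to Ehat is bijective onto E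
  set Φ : Ehat →ₗ[ℝ] E := E.orthogonalProjectionOnto.toLinearMap ∘ₗ Ehat.subtype with hΦdef
  have hΦval : ∀ v : Ehat, (Φ v : V) = S (v : V) := by
    intro v; rw [hSval]; rfl
  have hΦinj : Function.Injective Φ := by
    rw [← LinearMap.ker_eq_bot]
    rw [LinearMap.ker_eq_bot']
    intro v hv
    have hSv : S (v : V) = 0 := by
      rw [← hΦval, hv]; rfl
    have hLv : L v = (v : V) := by rw [hLval, hSv, sub_zero]
    have h5 := KEY v
    rw [hLv] at h5
    have hc : ‖v‖ = ‖(v : V)‖ := Submodule.coe_norm v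
    rw [hc] at h5
    have h7 : ‖(v : V)‖^2 ≤ 0 := by nlinarith
    have h8 : ‖(v : V)‖^2 = 0 := le_antisymm h7 (sq_nonneg _)
    have h9 : ‖(v : V)‖ = 0 := pow_eq_zero_iff two_ne_zero |>.mp h8
    exact Submodule.coe_eq_zero.mp (norm_eq_zero.mp h9)
  have hΦsurj : Function.Surjective Φ := by
    have hfr : Module.finrank ℝ Ehat = Module.finrank ℝ E := by rw [hdimEhat, hdimE]
    exact (LinearMap.injective_iff_surjective_of_finrank_eq_finrank hfr).mp hΦinj
  -- dirGap E Ehat ≤ s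
  have gap2 : dirGap E Ehat ≤ s := by
    unfold dirGap
    apply csSup_le
    · obtain ⟨u, hu⟩ := exists_ne (0 : E)
      exact ⟨_, ⟨(u : V), ⟨Submodule.coe_mem _, by simpa using hu⟩, rfl⟩⟩
    · rintro y ⟨u, ⟨huE, hu0⟩, rfl⟩
      obtain ⟨v, hv⟩ := hΦsurj ⟨u, huE⟩
      have hSw : S (v : V) = u := by rw [← hΦval, hv]
      set w : V := (v : V) with hwdef
      have hupos : (0:ℝ) < ‖u‖ := norm_pos_iff.mpr hu0
      have hw0 : w ≠ 0 := by
        intro h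
        apply hu0
        rw [← hSw, h, map_zero]
      have hwpos : (0:ℝ) < ‖w‖ := norm_pos_iff.mpr hw0
      -- ⟪u, w⟫ = ‖u‖²
      have huw : ⟪u, w⟫ = ‖u‖^2 := by
        have h1 : ⟪w - S w, u⟫ = 0 := hSorth w u huE
        have h2 : ⟪u, w⟫ = ⟪u, S w⟫ + ⟪u, w - S w⟫ := by
          rw [← inner_add_right]; congr 1; abel
        rw [h2, real_inner_comm (w - S w) u, h1, add_zero, hSw, real_inner_self_eq_norm_sq]
      -- (1 - lamMax)‖w‖² ≤ ‖u‖²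
      have hwle : (1 - lamMax) * ‖w‖^2 ≤ ‖u‖^2 := by
        have hpy : ‖w‖^2 = ‖S w‖^2 + ‖w - S w‖^2 := by
          have h3 : w = S w + (w - S w) := by abel
          have h4 : ⟪S w, w - S w⟫ = 0 := by
            rw [real_inner_comm]; exact hSorth w (S w) (hSmem w)
          nth_rewrite 1 [h3]
          rw [norm_add_sq_real, h4]; ring
        have h5 : ‖w - S w‖^2 ≤ lamMax * ‖w‖^2 := by
          have := KEY v
          rw [hLval] at this
          have hc : ‖v‖ = ‖(v : V)‖ := Submodule.coe_norm v
          rw [hc, ← hwdef] at this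
          exact this
        have h6 : ‖S w‖ = ‖u‖ := by rw [hSw]
        rw [h6] at hpy
        linarith
      -- candidate element
      set t : ℝ := ‖u‖^2 / ‖w‖^2 with htdef
      have hmemt : t • w ∈ Ehat := Submodule.smul_mem _ _ (Submodule.coe_mem v)
      have hval : ‖t • w - u‖^2 ≤ lamMax * ‖u‖^2 := by
        have hexp : ‖t • w - u‖^2 = t^2 * ‖w‖^2 - 2 * t * ‖u‖^2 + ‖u‖^2 := by
          rw [norm_sub_sq_real, real_inner_smul_left, real_inner_comm, huw, norm_smul]
          rw [Real.norm_eq_abs, mul_pow, sq_abs]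
          ring
        rw [hexp]
        have hw2 : (0:ℝ) < ‖w‖^2 := pow_pos hwpos 2
        have hu2 : (0:ℝ) < ‖u‖^2 := pow_pos hupos 2
        have ht0 : t * ‖w‖^2 = ‖u‖^2 := div_mul_cancel₀ _ hw2.ne'
        have ht1 : t^2 * ‖w‖^2 = t * ‖u‖^2 := by rw [pow_two, mul_assoc, ht0]
        have ht2 : (1 - lamMax) * ‖u‖^2 ≤ t * ‖u‖^2 := by
          apply mul_le_mul_of_nonneg_right _ hu2.le
          rw [htdef, le_div_iff₀ hw2]
          linarith
        linarith
      have hvle : ‖t • w - u‖ ≤ s * ‖u‖ := by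
        have h1 : ‖t • w - u‖ = Real.sqrt (‖t • w - u‖^2) := (Real.sqrt_sq (norm_nonneg _)).symm
        have h2 : s * ‖u‖ = Real.sqrt (lamMax * ‖u‖^2) := by
          rw [Real.sqrt_mul hlam0, Real.sqrt_sq (norm_nonneg _)]
        rw [h1, h2]
        exact Real.sqrt_le_sqrt hval
      have hinf : sInf ((fun v' => ‖v' - u‖ / ‖u‖) '' (Ehat : Set V)) ≤ ‖t • w - u‖ / ‖u‖ := by
        apply csInf_le
        · refine ⟨0, ?_⟩
          rintro z ⟨v', hv', rfl⟩; positivity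
        · exact ⟨t • w, hmemt, rfl⟩
      refine hinf.trans ?_
      rw [div_le_iff₀ hupos]
      exact hvle
  rw [gap1, max_eq_left (gap1 ▸ gap2)]
end
end
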